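/- arXiv:1409.4346 — 6 statements merged into one kernel-verified Lean document; each statement's English description precedes it below -/
import Mathlib

section
/- Fix a dimension n ≥ 1. Suppose that the logarithmic Brunn–Minkowski inequality holds for the Lebesgue measure in ℝⁿ, i.e. for all symmetric convex bodies K, L in ℝⁿ and all λ ∈ (0,1) one has vol(λ·K +₀ (1−λ)·L) ≥ vol(K)^λ · vol(L)^{1−λ}. Then for every even log-concave density f on ℝⁿ, every pair of symmetric convex bodies K, L in ℝⁿ and every λ ∈ (0,1), one has ∫_{λ·K +₀ (1−λ)·L} f(x) dx ≥ (∫_K f(x) dx)^λ · (∫_L f(x) dx)^{1−λ}. -/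
open MeasureTheory Set Pointwise

noncomputable section

/-- A convex body in `ℝⁿ`: a compact convex set with nonempty interior. -/
def IsConvexBody {n : ℕ} (K : Set (EuclideanSpace ℝ (Fin n))) : Prop :=
  Convex ℝ K ∧ IsCompact K ∧ (interior K).Nonempty

/-- The support function of a set. -/
def suppFun {n : ℕ} (K : Set (EuclideanSpace ℝ (Fin n)))
    (u : EuclideanSpace ℝ (Fin n)) : ℝ :=
  sSup ((fun y => (inner ℝ u y : ℝ)) '' K)

/-- The logarithmic combination `λ·K +₀ (1-λ)·L`. -/
def logComb {n : ℕ} (lam : ℝ) (K L : Set (EuclideanSpace ℝ (Fin n))) :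
    Set (EuclideanSpace ℝ (Fin n)) :=
  {x | ∀ u : EuclideanSpace ℝ (Fin n), ‖u‖ = 1 →
    (inner ℝ x u : ℝ) ≤ suppFun K u ^ lam * suppFun L u ^ (1 - lam)}

/-- An even log-concave density on `ℝⁿ`. -/
def IsEvenLogConcaveDensity {n : ℕ} (f : EuclideanSpace ℝ (Fin n) → ℝ) : Prop :=
  Integrable f volume ∧ (∀ x, 0 ≤ f x) ∧ (∀ x, f (-x) = f x) ∧
  ∀ x y : EuclideanSpace ℝ (Fin n), ∀ lam : ℝ, lam ∈ Set.Ioo (0:ℝ) 1 →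
    f x ^ lam * f y ^ (1 - lam) ≤ f (lam • x + (1 - lam) • y)

open scoped ENNReal NNReal

namespace LogBMAux

/-- 1-D change of variables for the Lebesgue integral. -/
theorem lintegral_image_eq {s : Set ℝ} {g : ℝ → ℝ} {g' : ℝ → ℝ}
    (hs : MeasurableSet s) (hg' : ∀ x ∈ s, HasDerivWithinAt g (g' x) s x) (hg : InjOn g s)
    (F : ℝ → ℝ≥0∞) :
    ∫⁻ x in g '' s, F x = ∫⁻ x in s, ENNReal.ofReal |g' x| * F (g x) := by
  simpa only [ContinuousLinearMap.det_toSpanSingleton] using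
    lintegral_image_eq_lintegral_abs_det_fderiv_mul volume hs
      (fun x hx => (hg' x hx).hasFDerivWithinAt) hg F

/-- 1-D Brunn-Minkowski for nonempty compact sets. -/
theorem bm1_compact {A B : Set ℝ} (hA : IsCompact A) (hB : IsCompact B)
    (hA0 : A.Nonempty) (hB0 : B.Nonempty) :
    volume A + volume B ≤ volume (A + B) := by
  set a := sSup A with ha_def
  set b := sInf B with hb_def
  have haA : a ∈ A := hA.sSup_mem hA0
  have hbB : b ∈ B := hB.sInf_mem hB0
  have h1 : (a +ᵥ B) ∪ (b +ᵥ A) ⊆ A + B := by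
    rintro x (⟨y, hy, rfl⟩ | ⟨y, hy, rfl⟩)
    · exact add_mem_add haA hy
    · simp only [vadd_eq_add]
      rw [add_comm b y]
      exact add_mem_add hy hbB
  have h2 : (a +ᵥ B) ∩ (b +ᵥ A) ⊆ {a + b} := by
    rintro x ⟨⟨y, hy, rfl⟩, ⟨z, hz, hx⟩⟩
    have h3 : b ≤ y := csInf_le hB.bddBelow hy
    have h4 : z ≤ a := le_csSup hA.bddAbove hz
    simp only [vadd_eq_add] at hx ⊢
    have : a + y = b + z := hx.symm
    have hy' : y = b := by linarith
    simp [hy']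
  have hmeas : MeasurableSet (b +ᵥ A) := hA.isClosed.measurableSet.const_vadd b
  have key : volume (a +ᵥ B) + volume (b +ᵥ A) =
      volume ((a +ᵥ B) ∪ (b +ᵥ A)) + volume ((a +ᵥ B) ∩ (b +ᵥ A)) :=
    (measure_union_add_inter _ hmeas).symm
  have h5 : volume ((a +ᵥ B) ∩ (b +ᵥ A)) = 0 :=
    measure_mono_null h2 (by simp)
  have h6 : volume (a +ᵥ B) = volume B := by simp
  have h7 : volume (b +ᵥ A) = volume A := by simp
  calc volume A + volume B = volume (a +ᵥ B) + volume (b +ᵥ A) := by rw [h6, h7, add_comm]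
    _ = volume ((a +ᵥ B) ∪ (b +ᵥ A)) := by rw [key, h5, add_zero]
    _ ≤ volume (A + B) := measure_mono h1

/-- 1-D Brunn-Minkowski for nonempty measurable sets of finite measure. -/
theorem bm1 {A B : Set ℝ} (hA : MeasurableSet A) (hB : MeasurableSet B)
    (hA0 : A.Nonempty) (hB0 : B.Nonempty) (hAf : volume A ≠ ∞) (hBf : volume B ≠ ∞) :
    volume A + volume B ≤ volume (A + B) := by
  rcases eq_top_or_lt_top (volume (A + B)) with htop | _
  · rw [htop]; exact le_top
  refine ENNReal.le_of_forall_pos_le_add fun ε hε _ => ?_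
  have hε2 : ((ε : ℝ≥0∞) / 2) ≠ 0 := by
    simp [ENNReal.div_eq_zero_iff, (ENNReal.coe_pos.mpr hε).ne']
  obtain ⟨KA, hKA_sub, hKA_c, hKA_lt⟩ := hA.exists_isCompact_lt_add hAf hε2
  obtain ⟨KB, hKB_sub, hKB_c, hKB_lt⟩ := hB.exists_isCompact_lt_add hBf hε2
  obtain ⟨a0, ha0⟩ := hA0
  obtain ⟨b0, hb0⟩ := hB0
  have hKA'c : IsCompact (insert a0 KA) := hKA_c.insert a0
  have hKB'c : IsCompact (insert b0 KB) := hKB_c.insert b0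
  have hKA'sub : insert a0 KA ⊆ A := insert_subset ha0 hKA_sub
  have hKB'sub : insert b0 KB ⊆ B := insert_subset hb0 hKB_sub
  have hbm := bm1_compact hKA'c hKB'c ⟨a0, mem_insert _ _⟩ ⟨b0, mem_insert _ _⟩
  calc volume A + volume B
      ≤ (volume (insert a0 KA) + ε / 2) + (volume (insert b0 KB) + ε / 2) := by
        gcongr
        · exact (hKA_lt.le.trans (add_le_add_left (measure_mono (subset_insert _ _)) _))
        · exact (hKB_lt.le.trans (add_le_add_left (measure_mono (subset_insert _ _)) _))
    _ = (volume (insert a0 KA) + volume (insert b0 KB)) + ε := by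
        rw [add_add_add_comm, ENNReal.add_halves]
    _ ≤ volume (insert a0 KA + insert b0 KB) + ε := add_le_add_left hbm _
    _ ≤ volume (A + B) + ε := add_le_add_left (measure_mono (add_subset_add hKA'sub hKB'sub)) _

/-- Weighted 1-D Brunn-Minkowski. -/
theorem bm1_weighted {lam : ℝ} (h0 : 0 < lam) (h1 : lam < 1) {A B : Set ℝ}
    (hA : MeasurableSet A) (hB : MeasurableSet B) (hA0 : A.Nonempty) (hB0 : B.Nonempty)
    (hAf : volume A ≠ ∞) (hBf : volume B ≠ ∞) :
    ENNReal.ofReal lam * volume A + ENNReal.ofReal (1 - lam) * volume B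
      ≤ volume (lam • A + (1 - lam) • B) := by
  have e1 : volume (lam • A) = ENNReal.ofReal lam * volume A := by
    rw [Measure.addHaar_smul]
    congr 2
    rw [Module.finrank_self, pow_one, abs_of_pos h0]
  have e2 : volume ((1 - lam) • B) = ENNReal.ofReal (1 - lam) * volume B := by
    rw [Measure.addHaar_smul]
    congr 2
    rw [Module.finrank_self, pow_one, abs_of_pos (by linarith)]
  rw [← e1, ← e2]
  exact bm1 (hA.const_smul₀ lam) (hB.const_smul₀ (1 - lam)) (hA0.smul_set) (hB0.smul_set)
    (by rw [e1]; exact ENNReal.mul_ne_top ENNReal.ofReal_ne_top hAf)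
    (by rw [e2]; exact ENNReal.mul_ne_top ENNReal.ofReal_ne_top hBf)

/-- Weighted AM-GM in `ℝ≥0∞`. -/
theorem ennreal_geom_mean_le {lam : ℝ} (h0 : 0 < lam) (h1 : lam < 1) (x y : ℝ≥0∞) :
    x ^ lam * y ^ (1 - lam) ≤ ENNReal.ofReal lam * x + ENNReal.ofReal (1 - lam) * y := by
  have h0' : (0:ℝ) < 1 - lam := by linarith
  rcases eq_or_ne x ∞ with rfl | hx
  · have h' : ENNReal.ofReal lam * ∞ = ∞ := ENNReal.mul_top (ENNReal.ofReal_pos.mpr h0).ne'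
    rw [h', top_add]; exact le_top
  rcases eq_or_ne y ∞ with rfl | hy
  · have h' : ENNReal.ofReal (1 - lam) * ∞ = ∞ :=
      ENNReal.mul_top (ENNReal.ofReal_pos.mpr h0').ne'
    rw [h', add_top]; exact le_top
  obtain ⟨x, rfl⟩ : ∃ x' : ℝ≥0, (x' : ℝ≥0∞) = x := ⟨x.toNNReal, ENNReal.coe_toNNReal hx⟩
  obtain ⟨y, rfl⟩ : ∃ y' : ℝ≥0, (y' : ℝ≥0∞) = y := ⟨y.toNNReal, ENNReal.coe_toNNReal hy⟩
  have hw : lam.toNNReal + (1 - lam).toNNReal = 1 := by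
    apply NNReal.coe_injective
    push_cast
    rw [Real.coe_toNNReal _ h0.le, Real.coe_toNNReal _ h0'.le]
    ring
  have key := NNReal.geom_mean_le_arith_mean2_weighted lam.toNNReal (1 - lam).toNNReal x y hw
  have c1 : ((lam.toNNReal : ℝ)) = lam := Real.coe_toNNReal _ h0.le
  have c2 : (((1 - lam).toNNReal : ℝ)) = 1 - lam := Real.coe_toNNReal _ h0'.le
  rw [c1, c2] at key
  calc (x : ℝ≥0∞) ^ lam * (y : ℝ≥0∞) ^ (1 - lam)
      = ((x ^ lam * y ^ (1 - lam) : ℝ≥0) : ℝ≥0∞) := by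
        rw [ENNReal.coe_mul, ENNReal.coe_rpow_of_nonneg _ h0.le,
          ENNReal.coe_rpow_of_nonneg _ h0'.le]
    _ ≤ ((lam.toNNReal * x + (1 - lam).toNNReal * y : ℝ≥0) : ℝ≥0∞) :=
        ENNReal.coe_le_coe.mpr key
    _ = ENNReal.ofReal lam * x + ENNReal.ofReal (1 - lam) * y := by
        rw [ENNReal.coe_add, ENNReal.coe_mul, ENNReal.coe_mul]
        rw [ENNReal.ofReal, ENNReal.ofReal]


/-- Layer cake representation for a pointwise finite measurable `ℝ≥0∞`-valued function. -/
theorem layer_cake {H : ℝ → ℝ≥0∞} (hHm : Measurable H) (hHfin : ∀ c, H c ≠ ∞) :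
    ∫⁻ c, H c = ∫⁻ t in Ioi (0:ℝ), volume {c | ENNReal.ofReal t < H c} := by
  have h1 : ∫⁻ c, H c = ∫⁻ c, ENNReal.ofReal ((H c).toReal) :=
    lintegral_congr fun c => (ENNReal.ofReal_toReal (hHfin c)).symm
  rw [h1, lintegral_eq_lintegral_meas_lt volume
    (Filter.Eventually.of_forall fun c => ENNReal.toReal_nonneg) hHm.ennreal_toReal.aemeasurable]
  refine setLIntegral_congr_fun measurableSet_Ioi (fun t ht => ?_)
  congr 1
  ext c
  simp only [mem_setOf_eq]
  exact (ENNReal.ofReal_lt_iff_lt_toReal ht.le (hHfin c)).symm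

/-- Scaling change of variables on `(0, ∞)`. -/
theorem scale_cov {m : ℝ} (hm : 0 < m) {v : ℝ → ℝ≥0∞} (hv : Measurable v) :
    ∫⁻ t in Ioi (0:ℝ), v t = ENNReal.ofReal m * ∫⁻ s in Ioi (0:ℝ), v (m * s) := by
  have himg : (fun s : ℝ => m * s) '' Ioi 0 = Ioi 0 := by
    ext t
    simp only [mem_image, mem_Ioi]
    constructor
    · rintro ⟨s, hs, rfl⟩; positivity
    · intro ht; exact ⟨t / m, by positivity, by field_simp⟩
  have hder : ∀ s ∈ Ioi (0:ℝ), HasDerivWithinAt (fun s : ℝ => m * s) m (Ioi 0) s := by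
    intro s _
    simpa using ((hasDerivAt_id s).const_mul m).hasDerivWithinAt
  have hinj : InjOn (fun s : ℝ => m * s) (Ioi 0) := fun a _ b _ h =>
    mul_left_cancel₀ hm.ne' h
  conv_lhs => rw [← himg]
  rw [lintegral_image_eq measurableSet_Ioi hder hinj v]
  have habs : ∫⁻ x in Ioi (0:ℝ), ENNReal.ofReal |m| * v (m * x)
      = ∫⁻ x in Ioi (0:ℝ), ENNReal.ofReal m * v (m * x) := by
    rw [abs_of_pos hm]
  have hv2 : Measurable (fun x : ℝ => v (m * x)) := hv.comp (measurable_const_mul m)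
  rw [habs, lintegral_const_mul _ hv2]

/-- One-dimensional Prékopa–Leindler-type inequality in `ℝ≥0∞`. -/
theorem prekopa_leindler_dim1 {lam : ℝ} (h0 : 0 < lam) (h1 : lam < 1)
    {F G M : ℝ → ℝ≥0∞} (hF : Measurable F) (hG : Measurable G) (hM : Measurable M)
    (hFtop : (⨆ a, F a) ≠ ∞) (hGtop : (⨆ a, G a) ≠ ∞)
    (hIF : ∫⁻ a, F a ≠ ∞) (hIG : ∫⁻ a, G a ≠ ∞)
    (hkey : ∀ a b : ℝ, F a ^ lam * G b ^ (1 - lam) ≤ M (lam * a + (1 - lam) * b)) :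
    (∫⁻ a, F a) ^ lam * (∫⁻ a, G a) ^ (1 - lam) ≤ ∫⁻ a, M a := by
  have h0' : (0:ℝ) < 1 - lam := by linarith
  rcases eq_or_ne (∫⁻ a, F a) 0 with hF0 | hF0
  · rw [hF0, ENNReal.zero_rpow_of_pos h0, zero_mul]; exact zero_le
  rcases eq_or_ne (∫⁻ a, G a) 0 with hG0 | hG0
  · rw [hG0, ENNReal.zero_rpow_of_pos h0', mul_zero]; exact zero_le
  set MF := ⨆ a, F a with hMF_def
  set MG := ⨆ a, G a with hMG_def
  have hMF0 : MF ≠ 0 := by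
    intro h
    apply hF0
    have hz : ∀ a, F a = 0 := fun a => le_antisymm (h ▸ le_iSup F a) (zero_le)
    simp [lintegral_congr hz]
  have hMG0 : MG ≠ 0 := by
    intro h
    apply hG0
    have hz : ∀ a, G a = 0 := fun a => le_antisymm (h ▸ le_iSup G a) (zero_le)
    simp [lintegral_congr hz]
  set MM := MF ^ lam * MG ^ (1 - lam) with hMM_def
  have hMFl_top : MF ^ lam ≠ ∞ := ENNReal.rpow_ne_top_of_nonneg h0.le hFtop
  have hMGl_top : MG ^ (1 - lam) ≠ ∞ := ENNReal.rpow_ne_top_of_nonneg h0'.le hGtop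
  have hMFl_0 : MF ^ lam ≠ 0 := by
    intro h
    rcases ENNReal.rpow_eq_zero_iff.mp h with ⟨h', _⟩ | ⟨h', _⟩
    exacts [hMF0 h', hFtop h']
  have hMGl_0 : MG ^ (1 - lam) ≠ 0 := by
    intro h
    rcases ENNReal.rpow_eq_zero_iff.mp h with ⟨h', _⟩ | ⟨h', _⟩
    exacts [hMG0 h', hGtop h']
  have hMM_top : MM ≠ ∞ := ENNReal.mul_ne_top hMFl_top hMGl_top
  have hMM0 : MM ≠ 0 := mul_ne_zero hMFl_0 hMGl_0
  set M' : ℝ → ℝ≥0∞ := fun c => min (M c) MM with hM'_def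
  have hM'm : Measurable M' := hM.min measurable_const
  have hM'fin : ∀ c, M' c ≠ ∞ := fun c => ne_top_of_le_ne_top hMM_top (min_le_right _ _)
  have hkey' : ∀ a b : ℝ, F a ^ lam * G b ^ (1 - lam) ≤ M' (lam * a + (1 - lam) * b) := by
    intro a b
    refine le_min (hkey a b) ?_
    exact mul_le_mul' (ENNReal.rpow_le_rpow (le_iSup F a) h0.le)
      (ENNReal.rpow_le_rpow (le_iSup G b) h0'.le)
  have hFfin : ∀ a, F a ≠ ∞ := fun a => ne_top_of_le_ne_top hFtop (le_iSup F a)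
  have hGfin : ∀ a, G a ≠ ∞ := fun a => ne_top_of_le_ne_top hGtop (le_iSup G a)
  -- level sets
  set Av : ℝ → Set ℝ := fun s => {a | ENNReal.ofReal s * MF < F a} with hAv_def
  set Bv : ℝ → Set ℝ := fun s => {b | ENNReal.ofReal s * MG < G b} with hBv_def
  set Mv : ℝ → Set ℝ := fun s => {c | ENNReal.ofReal s * MM < M' c} with hMv_def
  -- the generic representation
  have repr : ∀ (H : ℝ → ℝ≥0∞), Measurable H → (∀ c, H c ≠ ∞) →
      ∀ (N : ℝ≥0∞), N ≠ 0 → N ≠ ∞ →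
      ∫⁻ c, H c = N * ∫⁻ s in Ioi (0:ℝ), volume {c | ENNReal.ofReal s * N < H c} := by
    intro H hHm hHfin N hN0 hNtop
    have hvm : Measurable (fun t : ℝ => volume {c | ENNReal.ofReal t < H c}) := by
      have : Antitone (fun t : ℝ => volume {c | ENNReal.ofReal t < H c}) := by
        intro t1 t2 h12
        apply measure_mono
        intro c hc
        exact lt_of_le_of_lt (ENNReal.ofReal_le_ofReal h12) hc
      exact this.measurable
    have hmt : 0 < N.toReal := ENNReal.toReal_pos hN0 hNtop
    rw [layer_cake hHm hHfin, scale_cov hmt hvm, ENNReal.ofReal_toReal hNtop]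
    congr 1
    refine setLIntegral_congr_fun measurableSet_Ioi (fun s hs => ?_)
    congr 1
    ext c
    simp only [mem_setOf_eq]
    rw [ENNReal.ofReal_mul (le_of_lt hmt), ENNReal.ofReal_toReal hNtop, mul_comm]
  have reprF := repr F hF hFfin MF hMF0 hFtop
  have reprG := repr G hG hGfin MG hMG0 hGtop
  have reprM := repr M' hM'm hM'fin MM hMM0 hMM_top
  -- restrict to (0,1)
  have hAv_meas : ∀ s, MeasurableSet (Av s) := fun s => measurableSet_lt measurable_const hF
  have hBv_meas : ∀ s, MeasurableSet (Bv s) := fun s => measurableSet_lt measurable_const hG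
  have restrict01 : ∀ (H : ℝ → ℝ≥0∞), (∀ a, H a ≠ ∞) → ∀ (N : ℝ≥0∞),
      (∀ a, H a ≤ N) →
      ∫⁻ s in Ioi (0:ℝ), volume {c | ENNReal.ofReal s * N < H c}
        = ∫⁻ s in Ioo (0:ℝ) 1, volume {c | ENNReal.ofReal s * N < H c} := by
    intro H hHfin N hHle
    rw [← Ioo_union_Ici_eq_Ioi (zero_lt_one : (0:ℝ) < 1),
      lintegral_union measurableSet_Ici
        (disjoint_left.mpr fun s hs h1s => (lt_irrefl (1:ℝ)) (lt_of_le_of_lt h1s hs.2))]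
    have hzero : ∫⁻ s in Ici (1:ℝ), volume {c | ENNReal.ofReal s * N < H c} = 0 := by
      rw [setLIntegral_congr_fun measurableSet_Ici
        (fun s hs => ?_), lintegral_zero]
      have : {c | ENNReal.ofReal s * N < H c} = ∅ := by
        refine eq_empty_iff_forall_notMem.mpr fun c hc => ?_
        have h2 : H c ≤ N := hHle c
        have h3 : N ≤ ENNReal.ofReal s * N :=
          le_mul_of_one_le_left (zero_le) (ENNReal.one_le_ofReal.mpr hs)
        exact absurd (lt_of_le_of_lt (h2.trans h3) hc) (lt_irrefl _)
      rw [this, measure_empty]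
    rw [hzero, add_zero]
  have hFle : ∀ a, F a ≤ MF := fun a => le_iSup F a
  have hGle : ∀ a, G a ≤ MG := fun a => le_iSup G a
  have rF01 := restrict01 F hFfin MF hFle
  have rG01 := restrict01 G hGfin MG hGle
  set JF := ∫⁻ s in Ioo (0:ℝ) 1, volume (Av s) with hJF_def
  set JG := ∫⁻ s in Ioo (0:ℝ) 1, volume (Bv s) with hJG_def
  set JM := ∫⁻ s in Ioo (0:ℝ) 1, volume (Mv s) with hJM_def
  have hIF_eq : ∫⁻ a, F a = MF * JF := by rw [reprF, rF01]
  have hIG_eq : ∫⁻ a, G a = MG * JG := by rw [reprG, rG01]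
  have hIM_ge : MM * JM ≤ ∫⁻ c, M c := by
    have h2 : MM * JM ≤ MM * ∫⁻ s in Ioi (0:ℝ), volume (Mv s) :=
      mul_le_mul_right (lintegral_mono_set Ioo_subset_Ioi_self) _
    have h3 : ∫⁻ c, M' c ≤ ∫⁻ c, M c := lintegral_mono fun c => min_le_left _ _
    exact (h2.trans_eq reprM.symm).trans h3
  -- finiteness of level set measures
  have hAv_fin : ∀ s, 0 < s → volume (Av s) ≠ ∞ := by
    intro s hs h
    have hε : ENNReal.ofReal s * MF ≠ 0 := mul_ne_zero (ENNReal.ofReal_pos.mpr hs).ne' hMF0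
    have h2 : volume {a | ENNReal.ofReal s * MF ≤ F a} = ∞ :=
      top_le_iff.mp (h ▸ measure_mono (fun a ha =>
        show ENNReal.ofReal s * MF ≤ F a from le_of_lt ha))
    have h3 := mul_meas_ge_le_lintegral₀ (μ := volume) hF.aemeasurable (ENNReal.ofReal s * MF)
    rw [h2, ENNReal.mul_top hε] at h3
    exact hIF (top_le_iff.mp h3)
  have hBv_fin : ∀ s, 0 < s → volume (Bv s) ≠ ∞ := by
    intro s hs h
    have hε : ENNReal.ofReal s * MG ≠ 0 := mul_ne_zero (ENNReal.ofReal_pos.mpr hs).ne' hMG0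
    have h2 : volume {a | ENNReal.ofReal s * MG ≤ G a} = ∞ :=
      top_le_iff.mp (h ▸ measure_mono (fun a ha =>
        show ENNReal.ofReal s * MG ≤ G a from le_of_lt ha))
    have h3 := mul_meas_ge_le_lintegral₀ (μ := volume) hG.aemeasurable (ENNReal.ofReal s * MG)
    rw [h2, ENNReal.mul_top hε] at h3
    exact hIG (top_le_iff.mp h3)
  -- nonemptiness
  have hAv_ne : ∀ s, s < 1 → (Av s).Nonempty := by
    intro s hs
    have h2 : ENNReal.ofReal s * MF < MF := by
      conv_rhs => rw [← one_mul MF]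
      rw [mul_comm _ MF, mul_comm 1 MF]; exact ENNReal.mul_lt_mul_right hMF0 hFtop (ENNReal.ofReal_lt_one.mpr hs)
    obtain ⟨a, ha⟩ := lt_iSup_iff.mp h2
    exact ⟨a, ha⟩
  have hBv_ne : ∀ s, s < 1 → (Bv s).Nonempty := by
    intro s hs
    have h2 : ENNReal.ofReal s * MG < MG := by
      conv_rhs => rw [← one_mul MG]
      rw [mul_comm _ MG, mul_comm 1 MG]; exact ENNReal.mul_lt_mul_right hMG0 hGtop (ENNReal.ofReal_lt_one.mpr hs)
    obtain ⟨a, ha⟩ := lt_iSup_iff.mp h2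
    exact ⟨a, ha⟩
  -- key pointwise measure inequality
  have hpt : ∀ s, s ∈ Ioo (0:ℝ) 1 →
      ENNReal.ofReal lam * volume (Av s) + ENNReal.ofReal (1 - lam) * volume (Bv s)
        ≤ volume (Mv s) := by
    intro s hs
    have hsub : lam • Av s + (1 - lam) • Bv s ⊆ Mv s := by
      rintro _ ⟨_, ⟨a, ha, rfl⟩, _, ⟨b, hb, rfl⟩, rfl⟩
      show ENNReal.ofReal s * MM < M' (lam • a + (1 - lam) • b)
      have heq : lam • a + (1 - lam) • b = lam * a + (1 - lam) * b := by
        simp [smul_eq_mul]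
      rw [heq]
      refine lt_of_lt_of_le ?_ (hkey' a b)
      have hcalc : ENNReal.ofReal s * MM
          = (ENNReal.ofReal s * MF) ^ lam * (ENNReal.ofReal s * MG) ^ (1 - lam) := by
        rw [ENNReal.mul_rpow_of_nonneg _ _ h0.le, ENNReal.mul_rpow_of_nonneg _ _ h0'.le,
          mul_mul_mul_comm, ← ENNReal.rpow_add _ _ (ENNReal.ofReal_pos.mpr hs.1).ne'
            ENNReal.ofReal_ne_top]
        norm_num
        rfl
      rw [hcalc]
      exact ENNReal.mul_lt_mul (ENNReal.rpow_lt_rpow ha h0) (ENNReal.rpow_lt_rpow hb h0')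
    calc ENNReal.ofReal lam * volume (Av s) + ENNReal.ofReal (1 - lam) * volume (Bv s)
        ≤ volume (lam • Av s + (1 - lam) • Bv s) :=
          bm1_weighted h0 h1 (hAv_meas s) (hBv_meas s) (hAv_ne s hs.2) (hBv_ne s hs.2)
            (hAv_fin s hs.1) (hBv_fin s hs.1)
      _ ≤ volume (Mv s) := measure_mono hsub
  -- integrate the pointwise inequality
  have hMv_meas_fun : Measurable fun s => volume (Mv s) := by
    have : Antitone fun s => volume (Mv s) := by
      intro s1 s2 h12
      apply measure_mono
      intro c hc
      exact lt_of_le_of_lt (mul_le_mul_left (ENNReal.ofReal_le_ofReal h12) _) hc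
    exact this.measurable
  have hAv_meas_fun : Measurable fun s => volume (Av s) := by
    have : Antitone fun s => volume (Av s) := by
      intro s1 s2 h12
      apply measure_mono
      intro c hc
      exact lt_of_le_of_lt (mul_le_mul_left (ENNReal.ofReal_le_ofReal h12) _) hc
    exact this.measurable
  have hBv_meas_fun : Measurable fun s => volume (Bv s) := by
    have : Antitone fun s => volume (Bv s) := by
      intro s1 s2 h12
      apply measure_mono
      intro c hc
      exact lt_of_le_of_lt (mul_le_mul_left (ENNReal.ofReal_le_ofReal h12) _) hc
    exact this.measurable
  have hint : ENNReal.ofReal lam * JF + ENNReal.ofReal (1 - lam) * JG ≤ JM := by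
    have h2 := setLIntegral_mono (μ := volume) hMv_meas_fun hpt
    rw [lintegral_add_left (hAv_meas_fun.const_mul _)] at h2
    rw [lintegral_const_mul _ hAv_meas_fun, lintegral_const_mul _ hBv_meas_fun] at h2
    exact h2
  -- final chain
  calc (∫⁻ a, F a) ^ lam * (∫⁻ a, G a) ^ (1 - lam)
      = (MF * JF) ^ lam * (MG * JG) ^ (1 - lam) := by rw [hIF_eq, hIG_eq]
    _ = MM * (JF ^ lam * JG ^ (1 - lam)) := by
        rw [ENNReal.mul_rpow_of_nonneg _ _ h0.le, ENNReal.mul_rpow_of_nonneg _ _ h0'.le,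
          hMM_def, mul_mul_mul_comm]
    _ ≤ MM * (ENNReal.ofReal lam * JF + ENNReal.ofReal (1 - lam) * JG) :=
        mul_le_mul_right (ennreal_geom_mean_le h0 h1 JF JG) _
    _ ≤ MM * JM := mul_le_mul_right hint _
    _ ≤ ∫⁻ c, M c := hIM_ge


theorem inner_continuous (u : EuclideanSpace ℝ (Fin n)) :
    Continuous (fun y : EuclideanSpace ℝ (Fin n) => (inner ℝ u y : ℝ)) :=
  continuous_const.inner continuous_id

theorem suppFun_bddAbove {K : Set (EuclideanSpace ℝ (Fin n))} (hK : IsCompact K)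
    (u : EuclideanSpace ℝ (Fin n)) :
    BddAbove ((fun y => (inner ℝ u y : ℝ)) '' K) :=
  (hK.image (inner_continuous u)).bddAbove

theorem suppFun_nonneg {A : Set (EuclideanSpace ℝ (Fin n))} (hA : IsCompact A)
    (h0A : (0 : EuclideanSpace ℝ (Fin n)) ∈ A) (u : EuclideanSpace ℝ (Fin n)) :
    0 ≤ suppFun A u := by
  have : (0:ℝ) = inner ℝ u (0 : EuclideanSpace ℝ (Fin n)) := by simp
  rw [this]
  exact le_csSup (suppFun_bddAbove hA u) ⟨0, h0A, rfl⟩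

theorem suppFun_mono {A K : Set (EuclideanSpace ℝ (Fin n))} (hA0 : A.Nonempty)
    (hAK : A ⊆ K) (hK : IsCompact K) (u : EuclideanSpace ℝ (Fin n)) :
    suppFun A u ≤ suppFun K u :=
  csSup_le_csSup (suppFun_bddAbove hK u) (hA0.image _) (image_mono hAK)

theorem exists_suppFun_eq {A : Set (EuclideanSpace ℝ (Fin n))} (hA : IsCompact A)
    (hA0 : A.Nonempty) (u : EuclideanSpace ℝ (Fin n)) :
    ∃ x ∈ A, suppFun A u = inner ℝ u x := by
  obtain ⟨x, hxA, hmax⟩ := hA.exists_isMaxOn hA0 (inner_continuous u).continuousOn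
  refine ⟨x, hxA, IsGreatest.csSup_eq ⟨⟨x, hxA, rfl⟩, ?_⟩⟩
  rintro r ⟨y, hy, rfl⟩
  exact hmax hy

/-- The log-combination is contained in the Minkowski combination. -/
theorem logComb_subset_comb {lam : ℝ} (h0 : 0 < lam) (h1 : lam < 1)
    {A B : Set (EuclideanSpace ℝ (Fin n))}
    (hAc : IsCompact A) (hBc : IsCompact B) (hAconv : Convex ℝ A) (hBconv : Convex ℝ B)
    (hA0 : (0 : EuclideanSpace ℝ (Fin n)) ∈ A) (hB0 : (0 : EuclideanSpace ℝ (Fin n)) ∈ B) :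
    logComb lam A B ⊆ lam • A + (1 - lam) • B := by
  intro x hx
  by_contra hxW
  set W := lam • A + (1 - lam) • B with hW_def
  have hWconv : Convex ℝ W := (hAconv.smul lam).add (hBconv.smul (1 - lam))
  have hWA : IsCompact (lam • A) := by
    rw [← Set.image_smul]
    exact hAc.image (continuous_const_smul lam)
  have hWB : IsCompact ((1 - lam) • B) := by
    rw [← Set.image_smul]
    exact hBc.image (continuous_const_smul (1 - lam))
  have hWc : IsCompact W := hWA.add hWB
  obtain ⟨g, r, hgW, hgx⟩ := geometric_hahn_banach_closed_point hWconv hWc.isClosed hxW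
  set w := (InnerProductSpace.toDual ℝ (EuclideanSpace ℝ (Fin n))).symm g with hw_def
  have hgw : ∀ y, (inner ℝ w y : ℝ) = g y := fun y => InnerProductSpace.toDual_symm_apply
  have h0W : (0 : EuclideanSpace ℝ (Fin n)) ∈ W := by
    refine ⟨0, by simpa using smul_mem_smul_set (a := lam) hA0, 0,
      by simpa using smul_mem_smul_set (a := 1 - lam) hB0, by simp⟩
  have hw0 : w ≠ 0 := by
    intro h
    have h2 : g x = 0 := by rw [← hgw x, h, inner_zero_left]
    have h3 : g 0 = 0 := by rw [← hgw 0, inner_zero_right]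
    have h4 := hgW 0 h0W
    rw [h3] at h4
    rw [h2] at hgx
    exact absurd (h4.trans hgx) (lt_irrefl _)
  have hnw : 0 < ‖w‖ := norm_pos_iff.mpr hw0
  set u : EuclideanSpace ℝ (Fin n) := ‖w‖⁻¹ • w with hu_def
  have hu : ‖u‖ = 1 := by
    rw [hu_def, norm_smul, norm_inv, norm_norm, inv_mul_cancel₀ hnw.ne']
  have hg_eq : ∀ y, g y = ‖w‖ * (inner ℝ u y : ℝ) := by
    intro y
    rw [← hgw y, hu_def, real_inner_smul_left]
    rw [← mul_assoc, mul_inv_cancel₀ hnw.ne', one_mul]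
  -- suppFun values attained
  obtain ⟨a, haA, haEq⟩ := exists_suppFun_eq hAc ⟨0, hA0⟩ u
  obtain ⟨b, hbB, hbEq⟩ := exists_suppFun_eq hBc ⟨0, hB0⟩ u
  have hAnn : 0 ≤ suppFun A u := suppFun_nonneg hAc hA0 u
  have hBnn : 0 ≤ suppFun B u := suppFun_nonneg hBc hB0 u
  have hsum : suppFun A u ^ lam * suppFun B u ^ (1 - lam)
      ≤ lam * suppFun A u + (1 - lam) * suppFun B u :=
    Real.geom_mean_le_arith_mean2_weighted h0.le (by linarith) hAnn hBnn (by ring)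
  have hmem : lam • a + (1 - lam) • b ∈ W :=
    add_mem_add (smul_mem_smul_set haA) (smul_mem_smul_set hbB)
  have hlt : g (lam • a + (1 - lam) • b) < g x := (hgW _ hmem).trans hgx
  rw [hg_eq, hg_eq] at hlt
  have h2 : (inner ℝ u (lam • a + (1 - lam) • b) : ℝ) < inner ℝ u x :=
    lt_of_mul_lt_mul_left hlt hnw.le
  have h4 : (inner ℝ u (lam • a + (1 - lam) • b) : ℝ)
      = lam * inner ℝ u a + (1 - lam) * inner ℝ u b := by
    rw [inner_add_right, real_inner_smul_right u a lam, real_inner_smul_right u b (1 - lam)]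
  have h3 : (inner ℝ x u : ℝ) ≤ inner ℝ u (lam • a + (1 - lam) • b) := by
    rw [h4]
    calc (inner ℝ x u : ℝ) ≤ suppFun A u ^ lam * suppFun B u ^ (1 - lam) := hx u hu
      _ ≤ lam * suppFun A u + (1 - lam) * suppFun B u := hsum
      _ = lam * inner ℝ u a + (1 - lam) * inner ℝ u b := by rw [haEq, hbEq]
  rw [real_inner_comm] at h3
  exact absurd (h3.trans_lt h2) (lt_irrefl _)

theorem logComb_mono {lam : ℝ} (h0 : 0 ≤ lam) (h1 : lam ≤ 1)
    {A B K L : Set (EuclideanSpace ℝ (Fin n))}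
    (hAK : ∀ u, ‖u‖ = 1 → suppFun A u ≤ suppFun K u)
    (hBL : ∀ u, ‖u‖ = 1 → suppFun B u ≤ suppFun L u)
    (hApos : ∀ u, ‖u‖ = 1 → 0 ≤ suppFun A u)
    (hBpos : ∀ u, ‖u‖ = 1 → 0 ≤ suppFun B u) :
    logComb lam A B ⊆ logComb lam K L := by
  intro x hx u hu
  refine (hx u hu).trans ?_
  have h2 : suppFun A u ^ lam ≤ suppFun K u ^ lam :=
    Real.rpow_le_rpow (hApos u hu) (hAK u hu) h0
  have h3 : suppFun B u ^ (1 - lam) ≤ suppFun L u ^ (1 - lam) :=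
    Real.rpow_le_rpow (hBpos u hu) (hBL u hu) (by linarith)
  exact mul_le_mul h2 h3 (Real.rpow_nonneg (hBpos u hu) _)
    (Real.rpow_nonneg ((hApos u hu).trans (hAK u hu)) _)

theorem logComb_isClosed (lam : ℝ) (K L : Set (EuclideanSpace ℝ (Fin n))) :
    IsClosed (logComb lam K L) := by
  have heq : logComb lam K L = ⋂ u : EuclideanSpace ℝ (Fin n),
      {x | ‖u‖ = 1 → (inner ℝ x u : ℝ) ≤ suppFun K u ^ lam * suppFun L u ^ (1 - lam)} := by
    ext x
    simp only [logComb, mem_setOf_eq, mem_iInter]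
  rw [heq]
  refine isClosed_iInter fun u => ?_
  by_cases hu : ‖u‖ = 1
  · have : {x : EuclideanSpace ℝ (Fin n) |
        ‖u‖ = 1 → (inner ℝ x u : ℝ) ≤ suppFun K u ^ lam * suppFun L u ^ (1 - lam)}
        = {x | (inner ℝ x u : ℝ) ≤ suppFun K u ^ lam * suppFun L u ^ (1 - lam)} := by
      ext x; simp [hu]
    rw [this]
    exact isClosed_le (continuous_id.inner continuous_const) continuous_const
  · have : {x : EuclideanSpace ℝ (Fin n) |
        ‖u‖ = 1 → (inner ℝ x u : ℝ) ≤ suppFun K u ^ lam * suppFun L u ^ (1 - lam)}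
        = univ := by
      ext x; simp [hu]
    rw [this]
    exact isClosed_univ

theorem superlevel_convex {f : EuclideanSpace ℝ (Fin n) → ℝ}
    (hflc : ∀ x y : EuclideanSpace ℝ (Fin n), ∀ l : ℝ, l ∈ Set.Ioo (0:ℝ) 1 →
      f x ^ l * f y ^ (1 - l) ≤ f (l • x + (1 - l) • y))
    {t : ℝ} (ht : 0 < t) : Convex ℝ {x | t < f x} := by
  intro x hx y hy a b ha hb hab
  rcases eq_or_lt_of_le ha with ha0 | ha0
  · have hb1 : b = 1 := by linarith
    have : a • x + b • y = y := by rw [← ha0, hb1]; simp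
    rw [this]; exact hy
  rcases eq_or_lt_of_le hb with hb0 | hb0
  · have ha1 : a = 1 := by linarith
    have : a • x + b • y = x := by rw [← hb0, ha1]; simp
    rw [this]; exact hx
  have hb_eq : b = 1 - a := by linarith
  have ha1 : a < 1 := by linarith
  have hkey := hflc x y a ⟨ha0, ha1⟩
  show t < f (a • x + b • y)
  rw [hb_eq]
  refine lt_of_lt_of_le ?_ hkey
  calc t = t ^ a * t ^ (1 - a) := by
        rw [← Real.rpow_add ht, add_sub_cancel, Real.rpow_one]
    _ < f x ^ a * f y ^ (1 - a) :=
        mul_lt_mul'' (Real.rpow_lt_rpow ht.le hx ha0) (Real.rpow_lt_rpow ht.le hy (by linarith))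
          (Real.rpow_nonneg ht.le _) (Real.rpow_nonneg ht.le _)


/-- Key geometric inequality at a fixed pair of levels. -/
theorem key_geom {n : ℕ}
    (hLBM : ∀ K L : Set (EuclideanSpace ℝ (Fin n)),
      IsConvexBody K → K = -K → IsConvexBody L → L = -L →
      ∀ lam : ℝ, lam ∈ Set.Ioo (0:ℝ) 1 →
        volume K ^ lam * volume L ^ (1 - lam) ≤ volume (logComb lam K L))
    {f : EuclideanSpace ℝ (Fin n) → ℝ} (hfeven : ∀ x, f (-x) = f x)
    (hflc : ∀ x y : EuclideanSpace ℝ (Fin n), ∀ l : ℝ, l ∈ Set.Ioo (0:ℝ) 1 →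
      f x ^ l * f y ^ (1 - l) ≤ f (l • x + (1 - l) • y))
    {K L : Set (EuclideanSpace ℝ (Fin n))} (hK : IsConvexBody K) (hKs : K = -K)
    (hL : IsConvexBody L) (hLs : L = -L)
    {lam : ℝ} (hl0 : 0 < lam) (hl1 : lam < 1) {s t : ℝ} (hs : 0 < s) (ht : 0 < t) :
    volume ({x | s < f x} ∩ K) ^ lam * volume ({x | t < f x} ∩ L) ^ (1 - lam)
      ≤ volume ({x | s ^ lam * t ^ (1 - lam) < f x} ∩ logComb lam K L) := by
  have hl1' : (0:ℝ) < 1 - lam := by linarith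
  set SK := {x | s < f x} ∩ K with hSK_def
  set SL := {x | t < f x} ∩ L with hSL_def
  rcases eq_or_ne (volume SK) 0 with hSK0 | hSK0
  · rw [hSK0, ENNReal.zero_rpow_of_pos hl0, zero_mul]; exact zero_le
  rcases eq_or_ne (volume SL) 0 with hSL0 | hSL0
  · rw [hSL0, ENNReal.zero_rpow_of_pos hl1', mul_zero]; exact zero_le
  have hSKne : SK.Nonempty := nonempty_of_measure_ne_zero hSK0
  have hSLne : SL.Nonempty := nonempty_of_measure_ne_zero hSL0
  have hKcl : IsClosed K := hK.2.1.isClosed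
  have hLcl : IsClosed L := hL.2.1.isClosed
  have hSKconv : Convex ℝ SK := (superlevel_convex hflc hs).inter hK.1
  have hSLconv : Convex ℝ SL := (superlevel_convex hflc ht).inter hL.1
  have hmemK : ∀ x : EuclideanSpace ℝ (Fin n), x ∈ K → -x ∈ K := by
    intro x hx
    rw [hKs]
    exact Set.mem_neg.mpr (by rwa [neg_neg])
  have hmemL : ∀ x : EuclideanSpace ℝ (Fin n), x ∈ L → -x ∈ L := by
    intro x hx
    rw [hLs]
    exact Set.mem_neg.mpr (by rwa [neg_neg])
  have hSKneg : ∀ x, x ∈ SK → -x ∈ SK := by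
    rintro x ⟨h1, h2⟩
    refine ⟨?_, hmemK x h2⟩
    show s < f (-x)
    rwa [hfeven]
  have hSLneg : ∀ x, x ∈ SL → -x ∈ SL := by
    rintro x ⟨h1, h2⟩
    refine ⟨?_, hmemL x h2⟩
    show t < f (-x)
    rwa [hfeven]
  have hSKsym : SK = -SK := by
    ext x
    constructor
    · intro hx
      exact Set.mem_neg.mpr (hSKneg x hx)
    · intro hx
      have := hSKneg _ (Set.mem_neg.mp hx)
      rwa [neg_neg] at this
  have hSLsym : SL = -SL := by
    ext x
    constructor
    · intro hx
      exact Set.mem_neg.mpr (hSLneg x hx)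
    · intro hx
      have := hSLneg _ (Set.mem_neg.mp hx)
      rwa [neg_neg] at this
  have h0SK : (0 : EuclideanSpace ℝ (Fin n)) ∈ SK := by
    obtain ⟨x, hx⟩ := hSKne
    have hcv := hSKconv hx (hSKneg x hx) (by norm_num : (0:ℝ) ≤ 1/2)
      (by norm_num : (0:ℝ) ≤ 1/2) (by norm_num : (1/2:ℝ) + 1/2 = 1)
    simpa [smul_neg] using hcv
  have h0SL : (0 : EuclideanSpace ℝ (Fin n)) ∈ SL := by
    obtain ⟨x, hx⟩ := hSLne
    have hcv := hSLconv hx (hSLneg x hx) (by norm_num : (0:ℝ) ≤ 1/2)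
      (by norm_num : (0:ℝ) ≤ 1/2) (by norm_num : (1/2:ℝ) + 1/2 = 1)
    simpa [smul_neg] using hcv
  set A := closure SK with hA_def
  set B := closure SL with hB_def
  have hAK : A ⊆ K := closure_minimal inter_subset_right hKcl
  have hBL : B ⊆ L := closure_minimal inter_subset_right hLcl
  have hAc : IsCompact A := hK.2.1.of_isClosed_subset isClosed_closure hAK
  have hBc : IsCompact B := hL.2.1.of_isClosed_subset isClosed_closure hBL
  have hAconv : Convex ℝ A := hSKconv.closure
  have hBconv : Convex ℝ B := hSLconv.closure
  have hAsym : A = -A := by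
    calc A = closure (-SK) := by rw [← hSKsym]
      _ = -A := by
          have := (Homeomorph.neg (EuclideanSpace ℝ (Fin n))).preimage_closure SK
          simpa using this.symm
  have hBsym : B = -B := by
    calc B = closure (-SL) := by rw [← hSLsym]
      _ = -B := by
          have := (Homeomorph.neg (EuclideanSpace ℝ (Fin n))).preimage_closure SL
          simpa using this.symm
  have h0A : (0 : EuclideanSpace ℝ (Fin n)) ∈ A := subset_closure h0SK
  have h0B : (0 : EuclideanSpace ℝ (Fin n)) ∈ B := subset_closure h0SL
  have hvolA : volume SK ≤ volume A := measure_mono subset_closure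
  have hvolB : volume SL ≤ volume B := measure_mono subset_closure
  have hAint : (interior A).Nonempty := by
    by_contra h
    rw [not_nonempty_iff_eq_empty] at h
    have hfr : frontier A = A := by
      rw [frontier, h, diff_empty, hAc.isClosed.closure_eq]
    have hz : volume A = 0 := by
      rw [← hfr]; exact hAconv.addHaar_frontier volume
    exact hSK0 (le_antisymm (hz ▸ hvolA) (zero_le))
  have hBint : (interior B).Nonempty := by
    by_contra h
    rw [not_nonempty_iff_eq_empty] at h
    have hfr : frontier B = B := by
      rw [frontier, h, diff_empty, hBc.isClosed.closure_eq]
    have hz : volume B = 0 := by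
      rw [← hfr]; exact hBconv.addHaar_frontier volume
    exact hSL0 (le_antisymm (hz ▸ hvolB) (zero_le))
  have hlbm := hLBM A B ⟨hAconv, hAc, hAint⟩ hAsym ⟨hBconv, hBc, hBint⟩ hBsym lam ⟨hl0, hl1⟩
  set W := lam • SK + (1 - lam) • SL with hW_def
  have hWf : W ⊆ {x | s ^ lam * t ^ (1 - lam) < f x} := by
    rintro _ ⟨_, ⟨x, hx, rfl⟩, _, ⟨y, hy, rfl⟩, rfl⟩
    show s ^ lam * t ^ (1 - lam) < f (lam • x + (1 - lam) • y)
    refine lt_of_lt_of_le ?_ (hflc x y lam ⟨hl0, hl1⟩)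
    exact mul_lt_mul'' (Real.rpow_lt_rpow hs.le hx.1 hl0) (Real.rpow_lt_rpow ht.le hy.1 hl1')
      (Real.rpow_nonneg hs.le _) (Real.rpow_nonneg ht.le _)
  have hsub1 : logComb lam A B ⊆ logComb lam K L := by
    refine logComb_mono hl0.le hl1.le ?_ ?_ ?_ ?_
    · exact fun u _ => suppFun_mono ⟨0, h0A⟩ hAK hK.2.1 u
    · exact fun u _ => suppFun_mono ⟨0, h0B⟩ hBL hL.2.1 u
    · exact fun u _ => suppFun_nonneg hAc h0A u
    · exact fun u _ => suppFun_nonneg hBc h0B u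
  have hsub2 : logComb lam A B ⊆ closure W := by
    refine (logComb_subset_comb hl0 hl1 hAc hBc hAconv hBconv h0A h0B).trans ?_
    rintro _ ⟨_, ⟨x, hx, rfl⟩, _, ⟨y, hy, rfl⟩, rfl⟩
    refine map_mem_closure₂
      (f := fun p q : EuclideanSpace ℝ (Fin n) => lam • p + (1 - lam) • q) ?_ hx hy
      (fun p hp q hq => add_mem_add (smul_mem_smul_set hp) (smul_mem_smul_set hq))
    exact (continuous_fst.const_smul lam).add (continuous_snd.const_smul (1 - lam))
  have hWconv : Convex ℝ W := (hSKconv.smul lam).add (hSLconv.smul (1 - lam))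
  have hfrW : volume (closure W \ W) = 0 := by
    refine measure_mono_null ?_ (hWconv.addHaar_frontier volume)
    intro x hx
    exact ⟨hx.1, fun hi => hx.2 (interior_subset hi)⟩
  have hsplit : logComb lam A B ⊆
      ({x | s ^ lam * t ^ (1 - lam) < f x} ∩ logComb lam K L) ∪ (closure W \ W) := by
    intro x hx
    by_cases hxW : x ∈ W
    · exact Or.inl ⟨hWf hxW, hsub1 hx⟩
    · exact Or.inr ⟨hsub2 hx, hxW⟩
  calc volume SK ^ lam * volume SL ^ (1 - lam)
      ≤ volume A ^ lam * volume B ^ (1 - lam) :=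
        mul_le_mul' (ENNReal.rpow_le_rpow hvolA hl0.le) (ENNReal.rpow_le_rpow hvolB hl1'.le)
    _ ≤ volume (logComb lam A B) := hlbm
    _ ≤ volume (({x | s ^ lam * t ^ (1 - lam) < f x} ∩ logComb lam K L) ∪ (closure W \ W)) :=
        measure_mono hsplit
    _ ≤ volume ({x | s ^ lam * t ^ (1 - lam) < f x} ∩ logComb lam K L)
          + volume (closure W \ W) := measure_union_le _ _
    _ = volume ({x | s ^ lam * t ^ (1 - lam) < f x} ∩ logComb lam K L) := by
        rw [hfrW, add_zero]


end LogBMAux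

open LogBMAux

/-- If the log-Brunn-Minkowski inequality holds for the Lebesgue measure in dimension `n`,
then it holds for every even log-concave density in dimension `n`. -/
theorem logBM_lebesgue_implies_logBM_logconcave (n : ℕ) (hn : 1 ≤ n)
    (hLBM : ∀ K L : Set (EuclideanSpace ℝ (Fin n)),
      IsConvexBody K → K = -K → IsConvexBody L → L = -L →
      ∀ lam : ℝ, lam ∈ Set.Ioo (0:ℝ) 1 →
        volume K ^ lam * volume L ^ (1 - lam) ≤ volume (logComb lam K L)) :
    ∀ f : EuclideanSpace ℝ (Fin n) → ℝ, IsEvenLogConcaveDensity f →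
      ∀ K L : Set (EuclideanSpace ℝ (Fin n)),
        IsConvexBody K → K = -K → IsConvexBody L → L = -L →
        ∀ lam : ℝ, lam ∈ Set.Ioo (0:ℝ) 1 →
          (∫ x in K, f x) ^ lam * (∫ x in L, f x) ^ (1 - lam)
            ≤ ∫ x in logComb lam K L, f x := by
  intro f hf K L hK hKs hL hLs lam hlam
  obtain ⟨hl0, hl1⟩ := hlam
  obtain ⟨hfint, hf0, hfeven, hflc⟩ := hf
  have hl1' : (0:ℝ) < 1 - lam := by linarith
  have hfmax : ∀ x, f x ≤ f 0 := by
    intro x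
    rcases eq_or_lt_of_le (hf0 x) with h | h
    · rw [← h]; exact hf0 0
    · have h2 := hflc x (-x) (1/2) ⟨by norm_num, by norm_num⟩
      rw [hfeven x] at h2
      have h3 : f x ^ (1/2:ℝ) * f x ^ (1 - (1/2:ℝ)) = f x := by
        rw [← Real.rpow_add h]; norm_num
      have h4 : ((1/2:ℝ)) • x + ((1 - (1/2:ℝ))) • (-x) = (0 : EuclideanSpace ℝ (Fin n)) := by
        rw [smul_neg]
        norm_num
      rw [h3, h4] at h2
      exact h2
  have hKm : MeasurableSet K := hK.2.1.isClosed.measurableSet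
  have hLm : MeasurableSet L := hL.2.1.isClosed.measurableSet
  set Q := logComb lam K L with hQ_def
  have hQm : MeasurableSet Q := (logComb_isClosed lam K L).measurableSet
  set I : Set (EuclideanSpace ℝ (Fin n)) → ℝ≥0∞ :=
    fun S => ∫⁻ x in S, ENNReal.ofReal (f x) with hI_def
  have hIeq : ∀ S : Set (EuclideanSpace ℝ (Fin n)),
      ENNReal.ofReal (∫ x in S, f x) = I S := fun S =>
    ofReal_integral_eq_lintegral_ofReal hfint.restrict (Filter.Eventually.of_forall hf0)
  have hItot : ∀ S, I S ≠ ∞ := by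
    intro S
    have h2 : I S ≤ ∫⁻ x, ENNReal.ofReal (f x) := setLIntegral_le_lintegral _ _
    have h3 : ∫⁻ x, ENNReal.ofReal (f x) = ENNReal.ofReal (∫ x, f x) :=
      (ofReal_integral_eq_lintegral_ofReal hfint (Filter.Eventually.of_forall hf0)).symm
    exact ne_top_of_le_ne_top (h3 ▸ ENNReal.ofReal_ne_top) h2
  have hreal : ∀ S : Set (EuclideanSpace ℝ (Fin n)), ∫ x in S, f x = (I S).toReal := by
    intro S
    rw [← hIeq S, ENNReal.toReal_ofReal (integral_nonneg hf0)]
  rw [hreal K, hreal L, hreal Q]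
  suffices h : I K ^ lam * I L ^ (1 - lam) ≤ I Q by
    calc (I K).toReal ^ lam * (I L).toReal ^ (1 - lam)
        = (I K ^ lam * I L ^ (1 - lam)).toReal := by
          rw [ENNReal.toReal_mul, ENNReal.toReal_rpow, ENNReal.toReal_rpow]
      _ ≤ (I Q).toReal := ENNReal.toReal_mono (hItot Q) h
  rcases eq_or_ne (I K) 0 with hK0 | hK0
  · rw [hK0, ENNReal.zero_rpow_of_pos hl0, zero_mul]; exact zero_le
  rcases eq_or_ne (I L) 0 with hL0 | hL0
  · rw [hL0, ENNReal.zero_rpow_of_pos hl1', mul_zero]; exact zero_le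
  have hf0pos : 0 < f 0 := by
    rcases eq_or_lt_of_le (hf0 0) with h | h
    · exfalso
      apply hK0
      have hz : ∀ x, f x = 0 := fun x => le_antisymm ((hfmax x).trans_eq h.symm) (hf0 x)
      have : I K = 0 := by
        rw [hI_def]
        simp [hz]
      exact this
    · exact h
  have hlayer : ∀ S : Set (EuclideanSpace ℝ (Fin n)), MeasurableSet S →
      I S = ∫⁻ a : ℝ, ENNReal.ofReal (Real.exp (-a))
        * volume ({x | Real.exp (-a) < f x} ∩ S) := by
    intro S hS
    have h1 : I S = ∫⁻ t in Ioi (0:ℝ), volume ({x | t < f x} ∩ S) := by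
      have e : I S = ∫⁻ x in S, ENNReal.ofReal (f x) := rfl
      rw [e]
      rw [lintegral_eq_lintegral_meas_lt (volume.restrict S)
        (Filter.Eventually.of_forall hf0) hfint.aemeasurable.restrict]
      refine setLIntegral_congr_fun measurableSet_Ioi
        (fun t _ => ?_)
      rw [Measure.restrict_apply' hS]
    have himg : (fun a : ℝ => Real.exp (-a)) '' univ = Ioi 0 := by
      rw [image_univ]
      ext y
      simp only [mem_range, mem_Ioi]
      constructor
      · rintro ⟨a, rfl⟩; exact Real.exp_pos _
      · intro hy; exact ⟨-Real.log y, by rw [neg_neg, Real.exp_log hy]⟩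
    have hder : ∀ a ∈ (univ : Set ℝ), HasDerivWithinAt (fun a : ℝ => Real.exp (-a))
        (Real.exp (-a) * (-1)) univ a := by
      intro a _
      exact ((hasDerivAt_neg a).exp).hasDerivWithinAt
    have hinj : InjOn (fun a : ℝ => Real.exp (-a)) univ := by
      intro a _ b _ hab
      exact neg_injective (Real.exp_eq_exp.mp hab)
    rw [h1, ← himg, lintegral_image_eq MeasurableSet.univ hder hinj _, Measure.restrict_univ]
    refine lintegral_congr fun a => ?_
    rw [abs_mul, abs_neg, abs_one, mul_one, abs_of_pos (Real.exp_pos _)]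
  set φ : Set (EuclideanSpace ℝ (Fin n)) → ℝ → ℝ≥0∞ := fun S a =>
    ENNReal.ofReal (Real.exp (-a)) * volume ({x | Real.exp (-a) < f x} ∩ S) with hφ_def
  have hφm : ∀ S : Set (EuclideanSpace ℝ (Fin n)), Measurable (φ S) := by
    intro S
    have hmono : Monotone (fun a : ℝ => volume ({x | Real.exp (-a) < f x} ∩ S)) := by
      intro a b hab
      refine measure_mono (inter_subset_inter_left _ ?_)
      intro x hx
      exact lt_of_le_of_lt (Real.exp_le_exp.mpr (neg_le_neg hab)) hx
    exact (ENNReal.measurable_ofReal.comp (Real.measurable_exp.comp measurable_neg)).mul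
      hmono.measurable
  have hφbd : ∀ S : Set (EuclideanSpace ℝ (Fin n)), volume S ≠ ∞ → (⨆ a, φ S a) ≠ ∞ := by
    intro S hSfin
    have hle : ∀ a, φ S a ≤ ENNReal.ofReal (f 0) * volume S := by
      intro a
      rcases eq_empty_or_nonempty ({x | Real.exp (-a) < f x} ∩ S) with he | hne
      · calc φ S a
            = ENNReal.ofReal (Real.exp (-a)) * volume ({x | Real.exp (-a) < f x} ∩ S) := rfl
          _ = 0 := by rw [he, measure_empty, mul_zero]
          _ ≤ _ := zero_le
      · obtain ⟨x, hx1, hx2⟩ := hne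
        exact mul_le_mul' (ENNReal.ofReal_le_ofReal (le_of_lt (lt_of_lt_of_le hx1 (hfmax x))))
          (measure_mono inter_subset_right)
    exact ne_top_of_le_ne_top (ENNReal.mul_ne_top ENNReal.ofReal_ne_top hSfin) (iSup_le hle)
  have h0K : (0 : EuclideanSpace ℝ (Fin n)) ∈ K := by
    obtain ⟨x, hx⟩ := hK.2.2
    have hxK : x ∈ K := interior_subset hx
    have hnx : -x ∈ K := by rw [hKs]; exact Set.mem_neg.mpr (by rwa [neg_neg])
    have hcv := hK.1 hxK hnx (by norm_num : (0:ℝ) ≤ 1/2) (by norm_num : (0:ℝ) ≤ 1/2)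
      (by norm_num : (1/2:ℝ) + 1/2 = 1)
    simpa [smul_neg] using hcv
  have h0L : (0 : EuclideanSpace ℝ (Fin n)) ∈ L := by
    obtain ⟨x, hx⟩ := hL.2.2
    have hxL : x ∈ L := interior_subset hx
    have hnx : -x ∈ L := by rw [hLs]; exact Set.mem_neg.mpr (by rwa [neg_neg])
    have hcv := hL.1 hxL hnx (by norm_num : (0:ℝ) ≤ 1/2) (by norm_num : (0:ℝ) ≤ 1/2)
      (by norm_num : (1/2:ℝ) + 1/2 = 1)
    simpa [smul_neg] using hcv
  have hQfin : volume Q ≠ ∞ := by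
    have hsub := logComb_subset_comb hl0 hl1 hK.2.1 hL.2.1 hK.1 hL.1 h0K h0L
    have h1 : IsCompact (lam • K) := by
      rw [← Set.image_smul]; exact hK.2.1.image (continuous_const_smul _)
    have h2 : IsCompact ((1 - lam) • L) := by
      rw [← Set.image_smul]; exact hL.2.1.image (continuous_const_smul _)
    exact ne_top_of_le_ne_top (h1.add h2).measure_lt_top.ne (measure_mono hsub)
  have hkeyφ : ∀ a b : ℝ, φ K a ^ lam * φ L b ^ (1 - lam) ≤ φ Q (lam * a + (1 - lam) * b) := by
    intro a b
    have hgeo := key_geom hLBM hfeven hflc hK hKs hL hLs hl0 hl1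
      (Real.exp_pos (-a)) (Real.exp_pos (-b))
    have hexp1 : Real.exp (-a) ^ lam = Real.exp (-(lam * a)) := by
      rw [Real.rpow_def_of_pos (Real.exp_pos _), Real.log_exp]
      congr 1
      ring
    have hexp2 : Real.exp (-b) ^ (1 - lam) = Real.exp (-((1 - lam) * b)) := by
      rw [Real.rpow_def_of_pos (Real.exp_pos _), Real.log_exp]
      congr 1
      ring
    have hexp3 : Real.exp (-(lam * a)) * Real.exp (-((1 - lam) * b))
        = Real.exp (-(lam * a + (1 - lam) * b)) := by
      rw [← Real.exp_add]
      congr 1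
      ring
    have hsetEq : Real.exp (-a) ^ lam * Real.exp (-b) ^ (1 - lam)
        = Real.exp (-(lam * a + (1 - lam) * b)) := by
      rw [hexp1, hexp2, hexp3]
    calc φ K a ^ lam * φ L b ^ (1 - lam)
        = (ENNReal.ofReal (Real.exp (-a)) ^ lam * ENNReal.ofReal (Real.exp (-b)) ^ (1 - lam))
          * (volume ({x | Real.exp (-a) < f x} ∩ K) ^ lam
             * volume ({x | Real.exp (-b) < f x} ∩ L) ^ (1 - lam)) := by
          rw [hφ_def]
          rw [ENNReal.mul_rpow_of_nonneg _ _ hl0.le, ENNReal.mul_rpow_of_nonneg _ _ hl1'.le,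
            mul_mul_mul_comm]
      _ = ENNReal.ofReal (Real.exp (-(lam * a + (1 - lam) * b)))
          * (volume ({x | Real.exp (-a) < f x} ∩ K) ^ lam
             * volume ({x | Real.exp (-b) < f x} ∩ L) ^ (1 - lam)) := by
          rw [ENNReal.ofReal_rpow_of_pos (Real.exp_pos _),
            ENNReal.ofReal_rpow_of_pos (Real.exp_pos _),
            ← ENNReal.ofReal_mul (Real.rpow_nonneg (Real.exp_pos _).le _), hsetEq]
      _ ≤ ENNReal.ofReal (Real.exp (-(lam * a + (1 - lam) * b)))
          * volume ({x | Real.exp (-a) ^ lam * Real.exp (-b) ^ (1 - lam) < f x} ∩ Q) :=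
          mul_le_mul_right hgeo _
      _ = φ Q (lam * a + (1 - lam) * b) := by
          rw [hsetEq]
  have hPL := prekopa_leindler_dim1 hl0 hl1 (hφm K) (hφm L) (hφm Q)
    (hφbd K hK.2.1.measure_lt_top.ne) (hφbd L hL.2.1.measure_lt_top.ne)
    (by rw [← hlayer K hKm]; exact hItot K) (by rw [← hlayer L hLm]; exact hItot L)
    hkeyφ
  rw [hlayer K hKm, hlayer L hLm, hlayer Q hQm]
  exact hPL
end
end

section
/- Let φ : ℝⁿ → ℝ be an even convex function and t ∈ ℝ be such that the sublevel set {x : φ(x) ≤ t} and the minimum level set {x : φ(x) = φ(0)} are both convex bodies. Then there exists b > 0, depending only on φ and t, such that for every unit vector u and all r, s ∈ ℝ with φ(0) < r < s ≤ t, one has s − r ≤ b · ( h_{{φ≤s}}(u) − h_{{φ≤r}}(u) ), where h_A denotes the support function of the set A. -/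
open MeasureTheory Set Pointwise

noncomputable section

/-- Lemma 3.1: a quantitative separation of support functions of sublevel sets of an
even convex function. -/
theorem sublevel_support_separation (n : ℕ)
    (φ : EuclideanSpace ℝ (Fin n) → ℝ)
    (heven : ∀ x, φ (-x) = φ x) (hconv : ConvexOn ℝ Set.univ φ) (t : ℝ)
    (h1 : IsConvexBody {x | φ x ≤ t}) (h2 : IsConvexBody {x | φ x = φ 0}) :
    ∃ b > (0:ℝ), ∀ u : EuclideanSpace ℝ (Fin n), ‖u‖ = 1 →
      ∀ r s : ℝ, φ 0 < r → r < s → s ≤ t →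
        s - r ≤ b * (suppFun {x | φ x ≤ s} u - suppFun {x | φ x ≤ r} u) := by
  obtain ⟨hKconv, hKcomp, hKint⟩ := h1
  have hcont : Continuous φ :=
    continuousOn_univ.mp (hconv.continuousOn isOpen_univ)
  -- bound K_t in a ball
  obtain ⟨R, hRsub⟩ := hKcomp.isBounded.subset_closedBall 0
  have hR0 : (0:ℝ) ≤ R ∨ True := Or.inr trivial
  -- sup of φ on closedBall 0 (R+1)
  have hball : IsCompact (Metric.closedBall (0:EuclideanSpace ℝ (Fin n)) (R+1)) :=
    isCompact_closedBall _ _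
  have hbdd : BddAbove (φ '' Metric.closedBall (0:EuclideanSpace ℝ (Fin n)) (R+1)) :=
    (hball.image hcont).bddAbove
  set M : ℝ := sSup (φ '' Metric.closedBall (0:EuclideanSpace ℝ (Fin n)) (R+1)) with hM
  have hMle : ∀ x ∈ Metric.closedBall (0:EuclideanSpace ℝ (Fin n)) (R+1), φ x ≤ M :=
    fun x hx => le_csSup hbdd ⟨x, hx, rfl⟩
  have hR1 : (0:ℝ) ≤ R + 1 := by
    by_contra h
    push_neg at h
    obtain ⟨z, hz⟩ := hKint
    have hmem := hRsub (interior_subset hz)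
    rw [Metric.closedBall_eq_empty.2 (show R < 0 by linarith)] at hmem
    exact hmem
  have hM0 : φ 0 ≤ M := hMle 0 (by simpa using hR1)
  set L : ℝ := max (M - φ 0) (t - φ 0) + 1 with hL
  have hLpos : 0 < L := by
    have : (0:ℝ) ≤ M - φ 0 := by linarith
    have : (0:ℝ) ≤ max (M - φ 0) (t - φ 0) := le_trans this (le_max_left _ _)
    linarith
  refine ⟨L, hLpos, ?_⟩
  intro u hu r s hr hrs hst
  set c : ℝ := (s - r) / L with hc
  have hc0 : 0 < c := div_pos (by linarith) hLpos
  have hcL : c * L = s - r := div_mul_cancel₀ _ (ne_of_gt hLpos)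
  have hc1 : c ≤ 1 := by
    rw [div_le_one hLpos]
    have : s - r ≤ t - φ 0 := by linarith
    have h2 : t - φ 0 ≤ max (M - φ 0) (t - φ 0) := le_max_right _ _
    linarith
  -- K_r compact nonempty
  have hKr_closed : IsClosed {x : EuclideanSpace ℝ (Fin n) | φ x ≤ r} :=
    isClosed_le hcont continuous_const
  have hKr_sub : {x : EuclideanSpace ℝ (Fin n) | φ x ≤ r} ⊆ {x | φ x ≤ t} :=
    fun x hx => le_trans (show φ x ≤ r from hx) (by linarith)
  have hKr_comp : IsCompact {x : EuclideanSpace ℝ (Fin n) | φ x ≤ r} :=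
    hKcomp.of_isClosed_subset hKr_closed hKr_sub
  have hKr_ne : Set.Nonempty {x : EuclideanSpace ℝ (Fin n) | φ x ≤ r} :=
    ⟨0, le_of_lt hr⟩
  have hinner_cont : Continuous (fun y : EuclideanSpace ℝ (Fin n) => (inner ℝ u y : ℝ)) :=
    Continuous.inner continuous_const continuous_id
  obtain ⟨x, hxK, hxmax⟩ := hKr_comp.exists_isMaxOn hKr_ne hinner_cont.continuousOn
  have hxr : φ x ≤ r := hxK
  have hhr : suppFun {x | φ x ≤ r} u ≤ (inner ℝ u x : ℝ) := by
    apply csSup_le (hKr_ne.image _)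
    rintro _ ⟨z, hz, rfl⟩
    exact hxmax hz
  -- the shifted point
  set y : EuclideanSpace ℝ (Fin n) := x + c • u with hy
  have hxR : ‖x‖ ≤ R := by
    have := hRsub (hKr_sub hxK)
    simpa [Metric.mem_closedBall, dist_eq_norm] using this
  have hxuball : x + u ∈ Metric.closedBall (0:EuclideanSpace ℝ (Fin n)) (R+1) := by
    simp only [Metric.mem_closedBall, dist_eq_norm, sub_zero]
    calc ‖x + u‖ ≤ ‖x‖ + ‖u‖ := norm_add_le _ _
    _ ≤ R + 1 := by rw [hu]; linarith
  have hφxu : φ (x + u) ≤ M := hMle _ hxuball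
  have hys : φ y ≤ s := by
    have hcomb : y = (1 - c) • x + c • (x + u) := by
      rw [hy]
      rw [smul_add, sub_smul, one_smul]
      abel
    have hφy : φ y ≤ (1 - c) * φ x + c * φ (x + u) := by
      rw [hcomb]
      exact hconv.2 (mem_univ x) (mem_univ (x + u)) (by linarith) (le_of_lt hc0) (by ring)
    have hMax : M - φ 0 ≤ max (M - φ 0) (t - φ 0) := le_max_left _ _
    have hcM : c * (M - φ 0) ≤ c * L := by
      apply mul_le_mul_of_nonneg_left _ (le_of_lt hc0)
      linarith
    nlinarith [hc0.le, hxr, hφxu, hcL, hr.le]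
  have hiy : (inner ℝ u y : ℝ) = (inner ℝ u x : ℝ) + c := by
    rw [hy, inner_add_right, real_inner_smul_right]
    have : (inner ℝ u u : ℝ) = 1 := by
      rw [real_inner_self_eq_norm_sq, hu]; norm_num
    rw [this, mul_one]
  -- sup bound for K_s
  have hKs_bdd : BddAbove ((fun z : EuclideanSpace ℝ (Fin n) => (inner ℝ u z : ℝ)) '' {x | φ x ≤ s}) := by
    refine ⟨R, ?_⟩
    rintro _ ⟨z, hz, rfl⟩
    have hzR : ‖z‖ ≤ R := by
      have := hRsub (show z ∈ {x | φ x ≤ t} from le_trans hz hst)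
      simpa [Metric.mem_closedBall, dist_eq_norm] using this
    calc (inner ℝ u z : ℝ) ≤ ‖u‖ * ‖z‖ := real_inner_le_norm _ _
    _ ≤ 1 * R := by rw [hu]; exact mul_le_mul_of_nonneg_left hzR zero_le_one
    _ = R := one_mul R
  have hhs : (inner ℝ u y : ℝ) ≤ suppFun {x | φ x ≤ s} u :=
    le_csSup hKs_bdd ⟨y, hys, rfl⟩
  have hdiff : c ≤ suppFun {x | φ x ≤ s} u - suppFun {x | φ x ≤ r} u := by
    rw [hiy] at hhs
    linarith
  calc s - r = c * L := hcL.symm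
  _ = L * c := mul_comm _ _
  _ ≤ L * (suppFun {x | φ x ≤ s} u - suppFun {x | φ x ≤ r} u) :=
      mul_le_mul_of_nonneg_left hdiff hLpos.le
end
end

section
/- Let φ : ℝⁿ → ℝ be an even convex function and t ∈ ℝ be such that the sublevel set {x : φ(x) ≤ t} and the minimum level set {x : φ(x) = φ(0)} are both convex bodies. Then there exists c > |φ(0)| such that, defining for r ≥ 0 the set S(r) := {x : φ(x) ≤ t and φ(x) + c ≤ r}, the following holds: for every λ ∈ (0,1) and all r, s ≥ 0 for which S(r) and S(s) are nonempty, {x ∈ ℝⁿ : ⟨x,u⟩ ≤ h_{S(r)}(u)^λ · h_{S(s)}(u)^{1−λ} for every unit vector u} ⊆ S(r^λ s^{1−λ}). -/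
open MeasureTheory Set Pointwise

noncomputable section

/- ### Auxiliary scalar lemmas -/

lemma amgm_aux {lam p : ℝ} (h0 : 0 < lam) (h1 : lam < 1) (hp : 0 < p) :
    1 ≤ lam * p ^ (lam - 1) + (1 - lam) * p ^ lam := by
  have h := Real.geom_mean_le_arith_mean2_weighted (w₁ := lam) (w₂ := 1 - lam)
    (p₁ := p ^ (lam - 1)) (p₂ := p ^ lam) (le_of_lt h0) (by linarith)
    (le_of_lt (Real.rpow_pos_of_pos hp (lam - 1))) (le_of_lt (Real.rpow_pos_of_pos hp lam))
    (by ring)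
  refine le_trans (le_of_eq ?_) h
  rw [← Real.rpow_mul hp.le, ← Real.rpow_mul hp.le, ← Real.rpow_add hp,
    show (lam - 1) * lam + lam * (1 - lam) = 0 by ring, Real.rpow_zero]

/-- Monotonicity of `q ↦ (q^lam - q)/(1-q)` in product form. -/
lemma phi_mono {lam q p : ℝ} (h0 : 0 < lam) (h1 : lam < 1) (hq : 0 < q) (hqp : q ≤ p)
    (hp1 : p < 1) : (q ^ lam - q) * (1 - p) ≤ (p ^ lam - p) * (1 - q) := by
  set F : ℝ → ℝ := fun x => (x ^ lam - x) * (1 - p) - (p ^ lam - p) * (1 - x) with hF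
  have hderiv : ∀ y ∈ Icc q p, HasDerivAt F ((lam * y ^ (lam - 1) - 1) * (1 - p) + (p ^ lam - p)) y := by
    intro y hy
    have hy0 : 0 < y := lt_of_lt_of_le hq hy.1
    have h₁ : HasDerivAt (fun x : ℝ => x ^ lam) (lam * y ^ (lam - 1)) y :=
      Real.hasDerivAt_rpow_const (Or.inl hy0.ne')
    have h₂ : HasDerivAt (fun x : ℝ => (x ^ lam - x) * (1 - p)) ((lam * y ^ (lam - 1) - 1) * (1 - p)) y :=
      ((h₁.sub (hasDerivAt_id y)).mul_const _)
    have h₃ : HasDerivAt (fun x : ℝ => (p ^ lam - p) * (1 - x)) ((p ^ lam - p) * (-1)) y :=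
      ((hasDerivAt_id y).const_sub 1).const_mul _
    have := h₂.sub h₃
    exact this.congr_deriv (by ring)
  have hmono : MonotoneOn F (Icc q p) := by
    apply monotoneOn_of_deriv_nonneg (convex_Icc q p)
    · exact fun y hy => ((hderiv y hy).continuousAt).continuousWithinAt
    · intro y hy
      exact ((hderiv y (interior_subset hy)).differentiableAt).differentiableWithinAt
    · intro y hy
      rw [interior_Icc] at hy
      rw [(hderiv y (Ioo_subset_Icc_self hy)).deriv]
      have hy0 : 0 < y := lt_trans hq hy.1
      have hp0 : 0 < p := lt_trans hy0 hy.2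
      have hmonot : p ^ (lam - 1) ≤ y ^ (lam - 1) :=
        Real.rpow_le_rpow_of_nonpos hy0 hy.2.le (by linarith)
      have key := amgm_aux h0 h1 hp0
      have hplam : p ^ (lam - 1) * p = p ^ lam := by
        rw [← Real.rpow_add_one hp0.ne' (lam - 1)]; ring_nf
      nlinarith [mul_le_mul_of_nonneg_right (mul_le_mul_of_nonneg_left hmonot h0.le)
        (by linarith : (0:ℝ) ≤ 1 - p)]
  have := hmono (left_mem_Icc.mpr hqp) (right_mem_Icc.mpr hqp) hqp
  have hFp : F p = 0 := by simp only [hF]; ring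
  simp only [hF] at this hFp
  linarith

lemma key_scalar {lam A B r s L R : ℝ} (h0 : 0 < lam) (h1 : lam < 1)
    (hA : 0 < A) (hL : 0 < L) (hR : 0 < R) (hrs : r < s)
    (hgrow : A + (s - r) / L ≤ B) (hBR : B ≤ R) (hrRL : R * L ≤ r) :
    ∃ μ : ℝ, 0 ≤ μ ∧ μ ≤ 1 ∧ μ * r + (1 - μ) * s = r ^ lam * s ^ (1 - lam) ∧
      A ^ lam * B ^ (1 - lam) ≤ μ * A + (1 - μ) * B := by
  have hr : 0 < r := lt_of_lt_of_le (mul_pos hR hL) hrRL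
  have hs : 0 < s := hr.trans hrs
  have hsr : 0 < s - r := sub_pos.mpr hrs
  have hdL : 0 < (s - r) / L := div_pos hsr hL
  have hAB : A < B := by linarith
  have hB : 0 < B := hA.trans hAB
  set ρ := r ^ lam * s ^ (1 - lam) with hρ
  have hrr : r ^ lam * r ^ (1 - lam) = r := by
    rw [← Real.rpow_add hr, show lam + (1 - lam) = 1 by ring, Real.rpow_one]
  have hss : s ^ lam * s ^ (1 - lam) = s := by
    rw [← Real.rpow_add hs, show lam + (1 - lam) = 1 by ring, Real.rpow_one]
  have hρ1 : r ≤ ρ := by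
    rw [← hrr, hρ]
    exact mul_le_mul_of_nonneg_left
      (Real.rpow_le_rpow hr.le hrs.le (by linarith)) (Real.rpow_pos_of_pos hr lam).le
  have hρ2 : ρ ≤ s := by
    rw [← hss, hρ]
    exact mul_le_mul_of_nonneg_right
      (Real.rpow_le_rpow hr.le hrs.le h0.le) (Real.rpow_pos_of_pos hs (1 - lam)).le
  refine ⟨(s - ρ) / (s - r), div_nonneg (by linarith) hsr.le,
    (div_le_one hsr).mpr (by linarith), by field_simp; ring, ?_⟩
  set μ := (s - ρ) / (s - r) with hμ
  set q := A / B with hqdef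
  set p := r / s with hpdef
  have hq0 : 0 < q := div_pos hA hB
  have hq1 : q < 1 := (div_lt_one hB).mpr hAB
  have hp0 : 0 < p := div_pos hr hs
  have hp1 : p < 1 := (div_lt_one hs).mpr hrs
  have hqp : q ≤ p := by
    rw [hqdef, hpdef, div_le_div_iff₀ hB hs]
    have e1 : (s - r) / L * r ≤ (B - A) * r := mul_le_mul_of_nonneg_right (by linarith) hr.le
    have e2 : (s - r) / L * (R * L) ≤ (s - r) / L * r :=
      mul_le_mul_of_nonneg_left hrRL hdL.le
    have e3 : (s - r) / L * (R * L) = R * (s - r) := by field_simp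
    have e4 : A * (s - r) ≤ R * (s - r) := mul_le_mul_of_nonneg_right (by linarith) hsr.le
    nlinarith
  have hmono := phi_mono h0 h1 hq0 hqp hp1
  have eq1 : B * q = A := by rw [hqdef]; field_simp
  have eq2 : s * p = r := by rw [hpdef]; field_simp
  have eq3 : B * q ^ lam = A ^ lam * B ^ (1 - lam) := by
    rw [hqdef, Real.div_rpow hA.le hB.le]
    rw [Real.rpow_sub hB, Real.rpow_one]; ring
  have eq4 : s * p ^ lam = ρ := by
    rw [hpdef, Real.div_rpow hr.le hs.le, hρ, Real.rpow_sub hs, Real.rpow_one]; ring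
  have h5 : (A ^ lam * B ^ (1 - lam) - A) * (s - r) ≤ (ρ - r) * (B - A) := by
    have hBs := mul_le_mul_of_nonneg_right hmono (by positivity : (0:ℝ) ≤ B * s)
    calc (A ^ lam * B ^ (1 - lam) - A) * (s - r)
        = ((q ^ lam - q) * (1 - p)) * (B * s) := by
          rw [← eq3, ← eq1, ← eq2]; ring
      _ ≤ ((p ^ lam - p) * (1 - q)) * (B * s) := hBs
      _ = (ρ - r) * (B - A) := by rw [← eq4, ← eq2, ← eq1]; ring
  have e6 : (1 - μ) * (s - r) = ρ - r := by rw [hμ]; field_simp; ring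
  nlinarith [h5, e6]

/- ### Auxiliary geometric lemmas -/

variable {n : ℕ}

lemma suppFun_exists_max {K : Set (EuclideanSpace ℝ (Fin n))} (hK : IsCompact K)
    (hne : K.Nonempty) (u : EuclideanSpace ℝ (Fin n)) :
    ∃ y ∈ K, (inner ℝ u y : ℝ) = suppFun K u ∧
      ∀ z ∈ K, (inner ℝ u z : ℝ) ≤ suppFun K u := by
  have hcont : Continuous fun z : EuclideanSpace ℝ (Fin n) => (inner ℝ u z : ℝ) :=
    continuous_const.inner continuous_id
  obtain ⟨y, hy, hmax'⟩ := hK.exists_isMaxOn hne hcont.continuousOn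
  have hmax : ∀ z ∈ K, (inner ℝ u z : ℝ) ≤ inner ℝ u y := fun z hz => hmax' hz
  have hgr : IsGreatest ((fun z => (inner ℝ u z : ℝ)) '' K) (inner ℝ u y) :=
    ⟨mem_image_of_mem _ hy, by rintro _ ⟨z, hz, rfl⟩; exact hmax z hz⟩
  have : suppFun K u = (inner ℝ u y : ℝ) := hgr.csSup_eq
  exact ⟨y, hy, this.symm, fun z hz => by rw [this]; exact hmax z hz⟩

lemma suppFun_le_of_forall {K : Set (EuclideanSpace ℝ (Fin n))} (hne : K.Nonempty)
    {u : EuclideanSpace ℝ (Fin n)} {b : ℝ} (h : ∀ z ∈ K, (inner ℝ u z : ℝ) ≤ b) :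
    suppFun K u ≤ b :=
  csSup_le (hne.image _) (by rintro _ ⟨z, hz, rfl⟩; exact h z hz)

lemma le_suppFun {K : Set (EuclideanSpace ℝ (Fin n))} (hK : IsCompact K)
    {u z : EuclideanSpace ℝ (Fin n)} (hz : z ∈ K) : (inner ℝ u z : ℝ) ≤ suppFun K u := by
  have hcont : Continuous fun z : EuclideanSpace ℝ (Fin n) => (inner ℝ u z : ℝ) :=
    continuous_const.inner continuous_id
  exact le_csSup ((hK.image hcont).bddAbove) (mem_image_of_mem _ hz)

lemma mem_of_forall_inner_le {K : Set (EuclideanSpace ℝ (Fin n))} (hconv : Convex ℝ K)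
    (hcl : IsClosed K) (hne : K.Nonempty) {x : EuclideanSpace ℝ (Fin n)}
    (hx : ∀ u : EuclideanSpace ℝ (Fin n), ‖u‖ = 1 → (inner ℝ x u : ℝ) ≤ suppFun K u) :
    x ∈ K := by
  by_contra hxK
  obtain ⟨f, β, hfa, hfx⟩ := geometric_hahn_banach_closed_point hconv hcl hxK
  set w := (InnerProductSpace.toDual ℝ (EuclideanSpace ℝ (Fin n))).symm f with hwdef
  have hw : ∀ v, (inner ℝ w v : ℝ) = f v := fun v => InnerProductSpace.toDual_symm_apply
  have hwne : w ≠ 0 := by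
    obtain ⟨a, ha⟩ := hne
    intro h0
    have h1 := hfa a ha
    rw [← hw a, h0, inner_zero_left] at h1
    rw [← hw x, h0, inner_zero_left] at hfx
    linarith
  have hwpos : 0 < ‖w‖ := norm_pos_iff.mpr hwne
  set u := ‖w‖⁻¹ • w with hu
  have hu1 : ‖u‖ = 1 := norm_smul_inv_norm hwne
  have h1 : suppFun K u ≤ ‖w‖⁻¹ * β := by
    apply suppFun_le_of_forall hne
    intro z hz
    rw [hu, inner_smul_left]
    simp only [RCLike.star_def, conj_trivial]
    rw [hw z]
    exact mul_le_mul_of_nonneg_left (hfa z hz).le (by positivity)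
  have h2 : (inner ℝ x u : ℝ) = ‖w‖⁻¹ * f x := by
    rw [hu, inner_smul_right, real_inner_comm, hw x]
  have h3 := hx u hu1
  rw [h2] at h3
  have := lt_of_lt_of_le (mul_lt_mul_of_pos_left hfx (by positivity : (0:ℝ) < ‖w‖⁻¹))
    (le_trans h3 h1)
  exact lt_irrefl _ this

/- ### Main theorem -/

set_option maxHeartbeats 1000000 in
/-- Lemma 3.2: after adding a suitable constant `c` and truncating at level `t`,
the sublevel sets of an even convex function behave well with respect to the
logarithmic combination. -/
theorem sublevel_logComb_inclusion (n : ℕ)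
    (φ : EuclideanSpace ℝ (Fin n) → ℝ)
    (heven : ∀ x, φ (-x) = φ x) (hconv : ConvexOn ℝ Set.univ φ) (t : ℝ)
    (h1 : IsConvexBody {x | φ x ≤ t}) (h2 : IsConvexBody {x | φ x = φ 0}) :
    ∃ c > |φ 0|, ∀ lam : ℝ, lam ∈ Set.Ioo (0:ℝ) 1 → ∀ r s : ℝ, 0 ≤ r → 0 ≤ s →
      ({x | φ x ≤ t ∧ φ x + c ≤ r}).Nonempty →
      ({x | φ x ≤ t ∧ φ x + c ≤ s}).Nonempty →
      logComb lam {x | φ x ≤ t ∧ φ x + c ≤ r} {x | φ x ≤ t ∧ φ x + c ≤ s}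
        ⊆ {x | φ x ≤ t ∧ φ x + c ≤ r ^ lam * s ^ (1 - lam)} := by
  classical
  set m := φ 0 with hmdef
  -- m is the global minimum
  have hmin : ∀ x, m ≤ φ x := by
    intro x
    have h := hconv.2 (mem_univ x) (mem_univ (-x)) (by norm_num : (0:ℝ) ≤ 1/2)
      (by norm_num : (0:ℝ) ≤ 1/2) (by norm_num)
    have e : ((1:ℝ)/2) • x + ((1:ℝ)/2) • (-x) = 0 := by
      rw [smul_neg, add_neg_cancel]
    rw [e, heven x] at h
    simp only [smul_eq_mul] at h
    linarith
  obtain ⟨hKtconv, hKtcomp, hKtint⟩ := h1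
  have hKtne : ({x | φ x ≤ t} : Set (EuclideanSpace ℝ (Fin n))).Nonempty := by
    obtain ⟨y₀, hy₀⟩ := hKtint; exact ⟨y₀, interior_subset hy₀⟩
  have hmt : m ≤ t := by
    obtain ⟨y₀, hy₀⟩ := hKtne
    exact le_trans (hmin y₀) hy₀
  have hcont : Continuous φ := by
    rw [← continuousOn_univ]
    exact hconv.continuousOn isOpen_univ
  -- radius bound
  obtain ⟨R₀, hR₀⟩ := hKtcomp.isBounded.subset_closedBall 0
  set R := max R₀ 1 with hRdef
  have hR : (0:ℝ) < R := lt_of_lt_of_le one_pos (le_max_right _ _)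
  have hR1 : (1:ℝ) ≤ R := le_max_right _ _
  have hKtR : {x | φ x ≤ t} ⊆ Metric.closedBall 0 R :=
    hR₀.trans (Metric.closedBall_subset_closedBall (le_max_left _ _))
  -- maximum of φ on a big ball
  obtain ⟨x₀, -, hCmax⟩ := (isCompact_closedBall (0 : EuclideanSpace ℝ (Fin n)) (R + 1)).exists_isMaxOn
    ⟨0, Metric.mem_closedBall_self (by positivity)⟩ hcont.continuousOn
  set C := φ x₀ with hCdef
  have hCub : ∀ z ∈ Metric.closedBall (0 : EuclideanSpace ℝ (Fin n)) (R + 1), φ z ≤ C :=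
    fun z hz => hCmax hz
  have hCm : m ≤ C := hmin x₀
  set L := C - m + (t - m) + 1 with hLdef
  have hL : 0 < L := by simp only [hLdef]; linarith
  have hL1 : 1 ≤ L := by simp only [hLdef]; linarith
  -- small ball inside the minimum level set
  obtain ⟨xs, hxs⟩ := h2.2.2
  have hxs' : -xs ∈ {x | φ x = φ 0} := by
    have hx := interior_subset hxs
    simp only [mem_setOf_eq] at hx ⊢
    rw [heven, hx]
  have h0int : (0 : EuclideanSpace ℝ (Fin n)) ∈ interior {x | φ x = φ 0} := by
    have hcomb := h2.1.combo_interior_self_mem_interior hxs hxs'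
      (by norm_num : (0:ℝ) < 1/2) (by norm_num : (0:ℝ) ≤ 1/2) (by norm_num)
    have e : ((1:ℝ)/2) • xs + ((1:ℝ)/2) • (-xs) = 0 := by
      rw [smul_neg, add_neg_cancel]
    rwa [e] at hcomb
  obtain ⟨δ, hδ0, hδ⟩ := Metric.isOpen_iff.mp isOpen_interior 0 h0int
  have hδsub : Metric.ball (0 : EuclideanSpace ℝ (Fin n)) δ ⊆ {x | φ x = φ 0} :=
    hδ.trans interior_subset
  -- the choice of c
  refine ⟨2 * |m| + 1 + R * L, by nlinarith [abs_nonneg m, mul_pos hR hL], ?_⟩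
  set c := 2 * |m| + 1 + R * L with hcdef
  set M := m + c with hMdef
  have habs : -|m| ≤ m := neg_abs_le m
  have hMRL : R * L ≤ M := by simp only [hMdef, hcdef]; nlinarith [abs_nonneg m]
  have hM1 : 1 ≤ M := by
    have : (1:ℝ) ≤ R * L := by nlinarith
    simp only [hMdef, hcdef]; nlinarith [abs_nonneg m]
  have hM0 : 0 < M := lt_of_lt_of_le one_pos hM1
  have hMtc : M ≤ t + c := by simp only [hMdef]; linarith
  set Q : ℝ → Set (EuclideanSpace ℝ (Fin n)) := fun a => {x | φ x ≤ t ∧ φ x + c ≤ a} with hQdef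
  -- basic properties of Q
  have hQsub : ∀ a, Q a ⊆ {x | φ x ≤ t} := fun a z hz => hz.1
  have hQclosed : ∀ a, IsClosed (Q a) := by
    intro a
    have : Q a = {x | φ x ≤ t} ∩ {x | φ x + c ≤ a} := by
      ext z; simp only [hQdef, mem_setOf_eq, mem_inter_iff]
    rw [this]
    exact (isClosed_le hcont continuous_const).inter
      (isClosed_le (hcont.add continuous_const) continuous_const)
  have hQcomp : ∀ a, IsCompact (Q a) :=
    fun a => hKtcomp.of_isClosed_subset (hQclosed a) (hQsub a)
  have hQconv : ∀ a, Convex ℝ (Q a) := by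
    intro a
    have e1 : Convex ℝ {x : EuclideanSpace ℝ (Fin n) | φ x ≤ t} := by
      have := hconv.convex_le t
      simpa [sep_univ] using this
    have e2 : Convex ℝ {x : EuclideanSpace ℝ (Fin n) | φ x + c ≤ a} := by
      have := hconv.convex_le (a - c)
      have e : {x : EuclideanSpace ℝ (Fin n) | φ x + c ≤ a} = {x | φ x ≤ a - c} := by
        ext z; simp only [mem_setOf_eq]; constructor <;> intro h <;> linarith
      rw [e]
      simpa [sep_univ] using this
    have : Q a = {x | φ x ≤ t} ∩ {x | φ x + c ≤ a} := by
      ext z; simp only [hQdef, mem_setOf_eq, mem_inter_iff]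
    rw [this]
    exact e1.inter e2
  -- a small ball point gives positivity of the support function
  have hApos : ∀ a : ℝ, M ≤ a → ∀ u : EuclideanSpace ℝ (Fin n), ‖u‖ = 1 →
      δ / 2 ≤ suppFun (Q a) u := by
    intro a hMa u hu
    have hmem : (δ / 2) • u ∈ Q a := by
      have hball : (δ / 2) • u ∈ Metric.ball (0 : EuclideanSpace ℝ (Fin n)) δ := by
        rw [Metric.mem_ball, dist_zero_right, norm_smul, hu, mul_one, Real.norm_eq_abs,
          abs_of_nonneg (by linarith : (0:ℝ) ≤ δ / 2)]
        linarith
      have := hδsub hball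
      simp only [mem_setOf_eq] at this
      exact ⟨by rw [this]; exact hmt, by rw [this]; simpa only [hMdef] using hMa⟩
    have h := le_suppFun (u := u) (hQcomp a) hmem
    rwa [inner_smul_right, real_inner_self_eq_norm_mul_norm, hu, mul_one, mul_one] at h
  -- bound above for the support function
  have hBle : ∀ a : ℝ, (Q a).Nonempty → ∀ u : EuclideanSpace ℝ (Fin n), ‖u‖ = 1 →
      suppFun (Q a) u ≤ R := by
    intro a hne u hu
    apply suppFun_le_of_forall hne
    intro z hz
    have hzR : ‖z‖ ≤ R := by
      have := hKtR (hQsub a hz)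
      rwa [Metric.mem_closedBall, dist_zero_right] at this
    calc (inner ℝ u z : ℝ) ≤ ‖u‖ * ‖z‖ := real_inner_le_norm u z
      _ ≤ 1 * R := by rw [hu]; exact mul_le_mul_of_nonneg_left hzR (by norm_num)
      _ = R := one_mul R
  -- growth of the support function
  have hgrowth : ∀ a b : ℝ, M ≤ a → a ≤ b → b ≤ t + c → (Q a).Nonempty →
      ∀ u : EuclideanSpace ℝ (Fin n), ‖u‖ = 1 →
      suppFun (Q a) u + (b - a) / L ≤ suppFun (Q b) u := by
    intro a b hMa hab hbt hne u hu
    obtain ⟨y, hy, hyeq, -⟩ := suppFun_exists_max (hQcomp a) hne u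
    set θ := (b - a) / L with hθ
    have hθ0 : 0 ≤ θ := div_nonneg (by linarith) hL.le
    have hθ1 : θ ≤ 1 := by
      rw [hθ, div_le_one hL]
      simp only [hMdef] at hMa
      simp only [hLdef]
      linarith
    have hyu : y + u ∈ Metric.closedBall (0 : EuclideanSpace ℝ (Fin n)) (R + 1) := by
      rw [Metric.mem_closedBall, dist_zero_right]
      have hyR : ‖y‖ ≤ R := by
        have := hKtR (hQsub a hy)
        rwa [Metric.mem_closedBall, dist_zero_right] at this
      calc ‖y + u‖ ≤ ‖y‖ + ‖u‖ := norm_add_le _ _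
        _ ≤ R + 1 := by rw [hu]; linarith
    have hφyu : φ (y + u) ≤ C := hCub _ hyu
    have hzconv := hconv.2 (mem_univ y) (mem_univ (y + u)) (by linarith : (0:ℝ) ≤ 1 - θ)
      hθ0 (by ring)
    have hz : (1 - θ) • y + θ • (y + u) = y + θ • u := by
      rw [smul_add, ← add_assoc, ← add_smul]
      norm_num
    rw [hz] at hzconv
    simp only [smul_eq_mul] at hzconv
    have hφy : φ y ≤ a - c := by have := hy.2; linarith
    have hθL : θ * L = b - a := by rw [hθ]; field_simp
    have hb1 : φ (y + θ • u) ≤ b - c := by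
      have e1 : θ * φ (y + u) ≤ θ * C := mul_le_mul_of_nonneg_left hφyu hθ0
      have e3 : (1 - θ) * φ y ≤ (1 - θ) * (a - c) :=
        mul_le_mul_of_nonneg_left hφy (by linarith)
      have e4 : θ * m ≤ θ * (a - c) := by
        apply mul_le_mul_of_nonneg_left _ hθ0
        simp only [hMdef] at hMa; linarith
      have e2 : θ * (C - m) ≤ θ * L := mul_le_mul_of_nonneg_left (by simp only [hLdef]; linarith) hθ0
      rw [mul_sub] at e2
      nlinarith
    have hzQ : y + θ • u ∈ Q b := ⟨by linarith, by linarith⟩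
    have hin : (inner ℝ u (y + θ • u) : ℝ) = suppFun (Q a) u + θ := by
      rw [inner_add_right, inner_smul_right, real_inner_self_eq_norm_mul_norm, hu, hyeq]
      ring
    have hfin := le_suppFun (u := u) (hQcomp b) hzQ
    rw [hin] at hfin
    linarith
  -- chord property of the support function
  have hchord : ∀ a b μ : ℝ, M ≤ a → M ≤ b → a ≤ t + c → b ≤ t + c → 0 ≤ μ → μ ≤ 1 →
      (Q a).Nonempty → (Q b).Nonempty → ∀ u : EuclideanSpace ℝ (Fin n), ‖u‖ = 1 →
      μ * suppFun (Q a) u + (1 - μ) * suppFun (Q b) u ≤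
        suppFun (Q (μ * a + (1 - μ) * b)) u := by
    intro a b μ hMa hMb hat hbt hμ0 hμ1 hnea hneb u hu
    obtain ⟨y, hy, hyeq, -⟩ := suppFun_exists_max (hQcomp a) hnea u
    obtain ⟨z, hz, hzeq, -⟩ := suppFun_exists_max (hQcomp b) hneb u
    have hconvx := hconv.2 (mem_univ y) (mem_univ z) hμ0 (by linarith : (0:ℝ) ≤ 1 - μ)
      (by ring)
    simp only [smul_eq_mul] at hconvx
    have hmem : μ • y + (1 - μ) • z ∈ Q (μ * a + (1 - μ) * b) := by
      have hy1 : φ y ≤ t := hy.1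
      have hy2 : φ y + c ≤ a := hy.2
      have hz1 : φ z ≤ t := hz.1
      have hz2 : φ z + c ≤ b := hz.2
      have e1 : μ * φ y ≤ μ * t := mul_le_mul_of_nonneg_left hy1 hμ0
      have e2 : (1 - μ) * φ z ≤ (1 - μ) * t := mul_le_mul_of_nonneg_left hz1 (by linarith)
      have e3 : μ * φ y ≤ μ * (a - c) := mul_le_mul_of_nonneg_left (by linarith) hμ0
      have e4 : (1 - μ) * φ z ≤ (1 - μ) * (b - c) :=
        mul_le_mul_of_nonneg_left (by linarith) (by linarith)
      constructor
      · nlinarith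
      · nlinarith
    have hfin := le_suppFun (u := u) (hQcomp _) hmem
    rwa [inner_add_right, inner_smul_right, inner_smul_right, hyeq, hzeq] at hfin
  -- the key pointwise support-function inequality
  have hkey : ∀ lam' : ℝ, 0 < lam' → lam' < 1 → ∀ a b : ℝ, M ≤ a → a ≤ b → b ≤ t + c →
      (Q a).Nonempty → (Q b).Nonempty → ∀ u : EuclideanSpace ℝ (Fin n), ‖u‖ = 1 →
      suppFun (Q a) u ^ lam' * suppFun (Q b) u ^ (1 - lam') ≤
        suppFun (Q (a ^ lam' * b ^ (1 - lam'))) u := by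
    intro lam' hl0 hl1 a b hMa hab hbt hnea hneb u hu
    have hMb : M ≤ b := le_trans hMa hab
    have ha0 : 0 < a := lt_of_lt_of_le hM0 hMa
    have hApos' : 0 < suppFun (Q a) u := lt_of_lt_of_le (by positivity) (hApos a hMa u hu)
    rcases eq_or_lt_of_le hab with rfl | hab'
    · rw [← Real.rpow_add hApos', show lam' + (1 - lam') = 1 by ring, Real.rpow_one,
        ← Real.rpow_add ha0, show lam' + (1 - lam') = 1 by ring, Real.rpow_one]
    · obtain ⟨μ, hμ0, hμ1, hid, hineq⟩ := key_scalar hl0 hl1 hApos' hL hR hab'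
        (hgrowth a b hMa hab hbt hnea u hu) (hBle b hneb u hu) (le_trans hMRL hMa)
      have hch := hchord a b μ hMa hMb (by linarith) hbt hμ0 hμ1 hnea hneb u hu
      rw [hid] at hch
      exact le_trans hineq hch
  -- main argument
  intro lam hlam r s hr0 hs0 hner hnes x hx
  obtain ⟨hl0, hl1⟩ := hlam
  have hrM : M ≤ r := by
    obtain ⟨y, hy⟩ := hner
    have := hmin y
    simp only [hMdef]
    linarith [hy.2]
  have hsM : M ≤ s := by
    obtain ⟨y, hy⟩ := hnes
    have := hmin y
    simp only [hMdef]
    linarith [hy.2]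
  set r' := min r (t + c) with hr'def
  set s' := min s (t + c) with hs'def
  have hQr : ({x | φ x ≤ t ∧ φ x + c ≤ r} : Set (EuclideanSpace ℝ (Fin n))) = Q r' := by
    ext z
    simp only [hQdef, hr'def, mem_setOf_eq, le_min_iff]
    constructor
    · rintro ⟨h1, h2⟩; exact ⟨h1, h2, by linarith⟩
    · rintro ⟨h1, h2, h3⟩; exact ⟨h1, h2⟩
  have hQs : ({x | φ x ≤ t ∧ φ x + c ≤ s} : Set (EuclideanSpace ℝ (Fin n))) = Q s' := by
    ext z
    simp only [hQdef, hs'def, mem_setOf_eq, le_min_iff]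
    constructor
    · rintro ⟨h1, h2⟩; exact ⟨h1, h2, by linarith⟩
    · rintro ⟨h1, h2, h3⟩; exact ⟨h1, h2⟩
  have hr'M : M ≤ r' := le_min hrM hMtc
  have hs'M : M ≤ s' := le_min hsM hMtc
  have hr't : r' ≤ t + c := min_le_right _ _
  have hs't : s' ≤ t + c := min_le_right _ _
  have hr'0 : 0 < r' := lt_of_lt_of_le hM0 hr'M
  have hs'0 : 0 < s' := lt_of_lt_of_le hM0 hs'M
  have hner' : (Q r').Nonempty := hQr ▸ hner
  have hnes' : (Q s').Nonempty := hQs ▸ hnes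
  have hρ'M : M ≤ r' ^ lam * s' ^ (1 - lam) := by
    have e : M ^ lam * M ^ (1 - lam) = M := by
      rw [← Real.rpow_add hM0, show lam + (1 - lam) = 1 by ring, Real.rpow_one]
    calc M = M ^ lam * M ^ (1 - lam) := e.symm
      _ ≤ r' ^ lam * s' ^ (1 - lam) := by
          apply mul_le_mul (Real.rpow_le_rpow hM0.le hr'M hl0.le)
            (Real.rpow_le_rpow hM0.le hs'M (by linarith))
            (Real.rpow_pos_of_pos hM0 _).le (Real.rpow_pos_of_pos hr'0 _).le
  have hQρ'ne : (Q (r' ^ lam * s' ^ (1 - lam))).Nonempty := by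
    refine ⟨0, ?_, ?_⟩
    · exact hmt
    · rw [← hmdef]
      simp only [hMdef] at hρ'M
      linarith
  have hxmem : x ∈ Q (r' ^ lam * s' ^ (1 - lam)) := by
    apply mem_of_forall_inner_le (hQconv _) (hQclosed _) hQρ'ne
    intro u hu
    have hxu := hx u hu
    rw [hQr, hQs] at hxu
    refine le_trans hxu ?_
    rcases le_total r' s' with hcase | hcase
    · exact hkey lam hl0 hl1 r' s' hr'M hcase hs't hner' hnes' u hu
    · have h := hkey (1 - lam) (by linarith) (by linarith) s' r' hs'M hcase hr't hnes' hner' u hu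
      rw [sub_sub_cancel] at h
      rw [mul_comm (s' ^ (1 - lam)) (r' ^ lam)] at h
      rw [mul_comm (suppFun (Q r') u ^ lam) (suppFun (Q s') u ^ (1 - lam))]
      exact h
  refine ⟨hxmem.1, le_trans hxmem.2 ?_⟩
  apply mul_le_mul (Real.rpow_le_rpow hr'0.le (min_le_left _ _) hl0.le)
    (Real.rpow_le_rpow hs'0.le (min_le_left _ _) (by linarith))
    (Real.rpow_pos_of_pos hs'0 _).le (Real.rpow_nonneg hr0 _)
end
end

section
/- Let λ ∈ (0,1), a₁, a₂ > 0, let μ be a Borel measure on ℝⁿ that is finite on compact sets, let φ : ℝⁿ → [0,∞) be an even convex function, and let K, L be symmetric convex bodies in ℝⁿ. Assume that for all r₁, r₂ > 0, μ( (λ·K +₀ (1−λ)·L) ∩ {φ ≤ r₁^λ r₂^{1−λ}} ) ≥ μ( K ∩ {φ ≤ r₁} )^λ · μ( L ∩ {φ ≤ r₂} )^{1−λ}. Then ∫_{λ·K +₀ (1−λ)·L} exp(−a₁^λ a₂^{1−λ} φ(x)) dμ(x) ≥ ( ∫_K exp(−a₁ φ(x)) dμ(x) )^λ · ( ∫_L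 exp(−a₂ φ(x)) dμ(x) )^{1−λ}. -/
open MeasureTheory Set Pointwise
open Filter
open scoped ENNReal NNReal

noncomputable section

lemma vol_image_affine (a b : ℝ) (ha : a ≠ 0) (s : Set ℝ) :
    volume ((fun x => a * x + b) '' s) = ENNReal.ofReal |a| * volume s := by
  have himg : (fun x => a * x + b) '' s = (fun y => a⁻¹ * (y - b)) ⁻¹' s := by
    ext y
    constructor
    · rintro ⟨x, hx, rfl⟩
      show a⁻¹ * (a * x + b - b) ∈ s
      have : a⁻¹ * (a * x + b - b) = x := by field_simp; ring
      rw [this]; exact hx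
    · intro hy
      exact ⟨a⁻¹ * (y - b), hy, by field_simp; ring⟩
  rw [himg]
  have hcomp : (fun y => a⁻¹ * (y - b)) = (fun z => a⁻¹ * z) ∘ (fun y => y + (-b)) := by
    ext y; simp [sub_eq_add_neg]
  rw [hcomp, preimage_comp]
  rw [measure_preimage_add_right volume (-b) _]
  rw [Real.volume_preimage_mul_left (inv_ne_zero ha)]
  simp

lemma bm_compact {l : ℝ} (hl : l ∈ Set.Ioo (0:ℝ) 1) {K₁ K₂ : Set ℝ}
    (h1 : IsCompact K₁) (h2 : IsCompact K₂) (hne1 : K₁.Nonempty) (hne2 : K₂.Nonempty)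
    {S : Set ℝ} (hsub : ∀ x ∈ K₁, ∀ y ∈ K₂, l * x + (1 - l) * y ∈ S) :
    ENNReal.ofReal l * volume K₁ + ENNReal.ofReal (1 - l) * volume K₂ ≤ volume S := by
  obtain ⟨hl0, hl1⟩ := hl
  have hl1' : (0:ℝ) < 1 - l := by linarith
  set x₀ := sSup K₁ with hx₀def
  set y₀ := sInf K₂ with hy₀def
  have hx₀ : x₀ ∈ K₁ := h1.sSup_mem hne1
  have hy₀ : y₀ ∈ K₂ := h2.sInf_mem hne2
  set P := (fun x => l * x + (1 - l) * y₀) '' K₁ with hPdef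
  set Q := (fun y => (1 - l) * y + l * x₀) '' K₂ with hQdef
  have hPS : P ⊆ S := by
    rintro _ ⟨x, hx, rfl⟩; exact hsub x hx y₀ hy₀
  have hQS : Q ⊆ S := by
    rintro _ ⟨y, hy, rfl⟩
    have := hsub x₀ hx₀ y hy
    rwa [add_comm] at this
  have hPQ : P ∩ Q ⊆ {l * x₀ + (1 - l) * y₀} := by
    rintro z ⟨⟨x, hx, rfl⟩, ⟨y, hy, hzQ⟩⟩
    have hxle : x ≤ x₀ := le_csSup h1.bddAbove hx
    have hyge : y₀ ≤ y := csInf_le h2.bddBelow hy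
    have h1le : l * x + (1 - l) * y₀ ≤ l * x₀ + (1 - l) * y₀ := by nlinarith
    have hzQ' : (1 - l) * y + l * x₀ = l * x + (1 - l) * y₀ := hzQ
    have h2ge : l * x₀ + (1 - l) * y₀ ≤ l * x + (1 - l) * y₀ := by nlinarith
    simp [le_antisymm h1le h2ge]
  have hQmeas : MeasurableSet Q := by
    have : IsCompact Q := h2.image (by continuity)
    exact this.measurableSet
  have hkey : volume P + volume Q = volume (P ∪ Q) := by
    have h := measure_union_add_inter (μ := volume) P hQmeas
    have hz : volume (P ∩ Q) = 0 :=
      le_antisymm (le_trans (measure_mono hPQ) (by simp)) zero_le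
    rw [hz, add_zero] at h
    exact h.symm
  have hvolP : volume P = ENNReal.ofReal l * volume K₁ := by
    rw [hPdef, vol_image_affine l _ (ne_of_gt hl0), abs_of_pos hl0]
  have hvolQ : volume Q = ENNReal.ofReal (1 - l) * volume K₂ := by
    rw [hQdef, vol_image_affine (1 - l) _ (ne_of_gt hl1'), abs_of_pos hl1']
  calc ENNReal.ofReal l * volume K₁ + ENNReal.ofReal (1 - l) * volume K₂
      = volume P + volume Q := by rw [hvolP, hvolQ]
    _ = volume (P ∪ Q) := hkey
    _ ≤ volume S := measure_mono (union_subset hPS hQS)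

lemma bm_meas {l : ℝ} (hl : l ∈ Set.Ioo (0:ℝ) 1) {A B : Set ℝ}
    (hAm : MeasurableSet A) (hBm : MeasurableSet B)
    (hAne : A.Nonempty) (hBne : B.Nonempty)
    (hAfin : volume A ≠ ⊤) (hBfin : volume B ≠ ⊤)
    {S : Set ℝ} (hsub : ∀ x ∈ A, ∀ y ∈ B, l * x + (1 - l) * y ∈ S) :
    ENNReal.ofReal l * volume A + ENNReal.ofReal (1 - l) * volume B ≤ volume S := by
  apply ENNReal.le_of_forall_pos_le_add
  intro ε hε _
  have hε2 : ((ε : ℝ≥0∞) / 2) ≠ 0 := by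
    simp [ENNReal.div_eq_zero_iff, (by exact_mod_cast hε.ne' : (ε:ℝ≥0∞) ≠ 0)]
  obtain ⟨K₁, hK₁A, hK₁c, hK₁v⟩ := hAm.exists_isCompact_lt_add hAfin hε2
  obtain ⟨K₂, hK₂B, hK₂c, hK₂v⟩ := hBm.exists_isCompact_lt_add hBfin hε2
  obtain ⟨a, ha⟩ := hAne
  obtain ⟨b, hb⟩ := hBne
  set K₁' := insert a K₁ with hK₁'def
  set K₂' := insert b K₂ with hK₂'def
  have hK₁'c : IsCompact K₁' := hK₁c.insert a
  have hK₂'c : IsCompact K₂' := hK₂c.insert b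
  have hK₁'A : K₁' ⊆ A := insert_subset ha hK₁A
  have hK₂'B : K₂' ⊆ B := insert_subset hb hK₂B
  have key := bm_compact hl hK₁'c hK₂'c (insert_nonempty _ _) (insert_nonempty _ _)
    (fun x hx y hy => hsub x (hK₁'A hx) y (hK₂'B hy))
  have hA' : volume A ≤ volume K₁' + (ε : ℝ≥0∞) / 2 :=
    le_trans hK₁v.le (add_le_add_left (measure_mono (subset_insert _ _)) _)
  have hB' : volume B ≤ volume K₂' + (ε : ℝ≥0∞) / 2 :=
    le_trans hK₂v.le (add_le_add_left (measure_mono (subset_insert _ _)) _)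
  have hl' : ENNReal.ofReal l + ENNReal.ofReal (1 - l) = 1 := by
    rw [← ENNReal.ofReal_add hl.1.le (by linarith [hl.2])]
    norm_num
  calc ENNReal.ofReal l * volume A + ENNReal.ofReal (1 - l) * volume B
      ≤ ENNReal.ofReal l * (volume K₁' + (ε : ℝ≥0∞) / 2)
        + ENNReal.ofReal (1 - l) * (volume K₂' + (ε : ℝ≥0∞) / 2) :=
        add_le_add (mul_le_mul_right hA' _) (mul_le_mul_right hB' _)
    _ = (ENNReal.ofReal l * volume K₁' + ENNReal.ofReal (1 - l) * volume K₂')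
        + (ENNReal.ofReal l + ENNReal.ofReal (1 - l)) * ((ε : ℝ≥0∞) / 2) := by ring
    _ ≤ volume S + 1 * ((ε : ℝ≥0∞) / 2) := by
        rw [hl']
        exact add_le_add_left key _
    _ ≤ volume S + ε := by
        rw [one_mul]
        exact add_le_add_right (ENNReal.half_le_self) _

lemma ennreal_geom_le_arith {l : ℝ} (hl0 : 0 ≤ l) (hl1 : l ≤ 1) (a b : ℝ≥0∞)
    (ha : a ≠ ⊤) (hb : b ≠ ⊤) :
    a ^ l * b ^ (1 - l) ≤ ENNReal.ofReal l * a + ENNReal.ofReal (1 - l) * b := by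
  have h1l : (0:ℝ) ≤ 1 - l := by linarith
  conv_lhs => rw [← ENNReal.ofReal_toReal ha, ← ENNReal.ofReal_toReal hb]
  rw [ENNReal.ofReal_rpow_of_nonneg a.toReal_nonneg hl0,
    ENNReal.ofReal_rpow_of_nonneg b.toReal_nonneg h1l,
    ← ENNReal.ofReal_mul (Real.rpow_nonneg a.toReal_nonneg l)]
  calc ENNReal.ofReal (a.toReal ^ l * b.toReal ^ (1 - l))
      ≤ ENNReal.ofReal (l * a.toReal + (1 - l) * b.toReal) :=
        ENNReal.ofReal_le_ofReal
          (Real.geom_mean_le_arith_mean2_weighted hl0 h1l a.toReal_nonneg b.toReal_nonneg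
            (by ring))
    _ = ENNReal.ofReal l * a + ENNReal.ofReal (1 - l) * b := by
        rw [ENNReal.ofReal_add (by positivity) (by positivity),
          ENNReal.ofReal_mul hl0, ENNReal.ofReal_mul h1l,
          ENNReal.ofReal_toReal ha, ENNReal.ofReal_toReal hb]

-- layer cake for functions bounded by 1
lemma cake_le_one (f : ℝ → ℝ≥0∞) (hm : Measurable f) (hb : ∀ x, f x ≤ 1) :
    ∫⁻ x, f x = ∫⁻ t in Ioo (0:ℝ) 1, volume {x | ENNReal.ofReal t < f x} := by
  have h1 : ∀ x, f x ≠ ⊤ := fun x => (lt_of_le_of_lt (hb x) (by simp)).ne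
  have e1 : ∫⁻ x, f x = ∫⁻ x, ENNReal.ofReal ((f x).toReal) := by
    exact lintegral_congr fun x => (ENNReal.ofReal_toReal (h1 x)).symm
  rw [e1, lintegral_eq_lintegral_meas_lt volume
    (Filter.Eventually.of_forall fun x => ENNReal.toReal_nonneg)
    hm.ennreal_toReal.aemeasurable]
  have hsplit : Ioi (0:ℝ) = Ioo (0:ℝ) 1 ∪ Ici (1:ℝ) := by
    ext t
    simp only [mem_Ioi, mem_union, mem_Ioo, mem_Ici]
    constructor
    · intro ht; rcases lt_or_ge t 1 with h | h
      · exact Or.inl ⟨ht, h⟩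
      · exact Or.inr h
    · rintro (⟨h, _⟩ | h); exact h; linarith
  rw [hsplit, lintegral_union measurableSet_Ici (by
    rw [Set.disjoint_left]; rintro t ⟨_, ht1⟩ ht2; exact absurd ht2 (not_le.mpr ht1))]
  have hzero : ∫⁻ t in Ici (1:ℝ), volume {a | t < (f a).toReal} = 0 := by
    rw [setLIntegral_congr_fun measurableSet_Ici
      (fun t ht => ?_), lintegral_zero]
    have : {a | t < (f a).toReal} = ∅ := by
      ext x
      simp only [mem_setOf_eq, mem_empty_iff_false, iff_false, not_lt]
      calc (f x).toReal ≤ (1:ℝ≥0∞).toReal := ENNReal.toReal_mono (by simp) (hb x)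
        _ = 1 := by simp
        _ ≤ t := ht
    rw [this]; simp
  rw [hzero, add_zero]
  apply setLIntegral_congr_fun measurableSet_Ioo
  intro t ht
  dsimp only
  congr 1
  ext x
  simp only [mem_setOf_eq]
  exact (ENNReal.ofReal_lt_iff_lt_toReal ht.1.le (h1 x)).symm

lemma pl_norm {l : ℝ} (hl : l ∈ Set.Ioo (0:ℝ) 1) (f g h : ℝ → ℝ≥0∞)
    (hfm : Measurable f) (hgm : Measurable g) (hhm : Measurable h)
    (hfb : ∀ x, f x ≤ 1) (hgb : ∀ x, g x ≤ 1) (hhb : ∀ x, h x ≤ 1)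
    (hfs : ∀ t : ℝ, t < 1 → ∃ x, ENNReal.ofReal t < f x)
    (hgs : ∀ t : ℝ, t < 1 → ∃ x, ENNReal.ofReal t < g x)
    (hfI : ∫⁻ x, f x ≠ ⊤) (hgI : ∫⁻ x, g x ≠ ⊤)
    (hc : ∀ x y, f x ^ l * g y ^ (1 - l) ≤ h (l * x + (1 - l) * y)) :
    (∫⁻ x, f x) ^ l * (∫⁻ x, g x) ^ (1 - l) ≤ ∫⁻ x, h x := by
  obtain ⟨hl0, hl1⟩ := hl
  have hkey : ∀ t ∈ Ioo (0:ℝ) 1,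
      ENNReal.ofReal l * volume {x | ENNReal.ofReal t < f x}
        + ENNReal.ofReal (1 - l) * volume {x | ENNReal.ofReal t < g x}
      ≤ volume {x | ENNReal.ofReal t < h x} := by
    intro t ht
    have htne : ENNReal.ofReal t ≠ 0 := by
      simp [ENNReal.ofReal_eq_zero, not_le, ht.1]
    have hAm : MeasurableSet {x | ENNReal.ofReal t < f x} :=
      measurableSet_lt measurable_const hfm
    have hBm : MeasurableSet {x | ENNReal.ofReal t < g x} :=
      measurableSet_lt measurable_const hgm
    have hAfin : volume {x | ENNReal.ofReal t < f x} ≠ ⊤ := by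
      have hsub : {x | ENNReal.ofReal t < f x} ⊆ {x | ENNReal.ofReal t ≤ f x} :=
        Set.setOf_subset_setOf.mpr (fun x => le_of_lt)
      refine ne_of_lt (lt_of_le_of_lt (measure_mono hsub) ?_)
      refine lt_of_le_of_lt (meas_ge_le_lintegral_div hfm.aemeasurable htne (by simp)) ?_
      exact ENNReal.div_lt_top hfI htne
    have hBfin : volume {x | ENNReal.ofReal t < g x} ≠ ⊤ := by
      have hsub : {x | ENNReal.ofReal t < g x} ⊆ {x | ENNReal.ofReal t ≤ g x} :=
        Set.setOf_subset_setOf.mpr (fun x => le_of_lt)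
      refine ne_of_lt (lt_of_le_of_lt (measure_mono hsub) ?_)
      refine lt_of_le_of_lt (meas_ge_le_lintegral_div hgm.aemeasurable htne (by simp)) ?_
      exact ENNReal.div_lt_top hgI htne
    refine bm_meas ⟨hl0, hl1⟩ hAm hBm (hfs t ht.2) (hgs t ht.2) hAfin hBfin ?_
    intro x hx y hy
    have h1 : ENNReal.ofReal t < f x ^ l * g y ^ (1 - l) := by
      have e : ENNReal.ofReal t = (ENNReal.ofReal t) ^ l * (ENNReal.ofReal t) ^ (1 - l) := by
        rw [← ENNReal.rpow_add l (1 - l) htne (by simp)]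
        norm_num
      rw [e]
      exact ENNReal.mul_lt_mul (ENNReal.rpow_lt_rpow hx hl0)
        (ENNReal.rpow_lt_rpow hy (by linarith))
    exact lt_of_lt_of_le h1 (hc x y)
  have hΦf : Measurable fun t : ℝ => volume {x | ENNReal.ofReal t < f x} := by
    apply Antitone.measurable
    intro s t hst
    exact measure_mono fun x hx => lt_of_le_of_lt (ENNReal.ofReal_le_ofReal hst) hx
  have hΦg : Measurable fun t : ℝ => volume {x | ENNReal.ofReal t < g x} := by
    apply Antitone.measurable
    intro s t hst
    exact measure_mono fun x hx => lt_of_le_of_lt (ENNReal.ofReal_le_ofReal hst) hx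
  calc (∫⁻ x, f x) ^ l * (∫⁻ x, g x) ^ (1 - l)
      ≤ (ENNReal.ofReal l * ∫⁻ x, f x) + ENNReal.ofReal (1 - l) * ∫⁻ x, g x :=
        ennreal_geom_le_arith hl0.le (by linarith) _ _ hfI hgI
    _ = ∫⁻ t in Ioo (0:ℝ) 1, (ENNReal.ofReal l * volume {x | ENNReal.ofReal t < f x}
          + ENNReal.ofReal (1 - l) * volume {x | ENNReal.ofReal t < g x}) := by
        rw [cake_le_one f hfm hfb, cake_le_one g hgm hgb,
          lintegral_add_left (hΦf.const_mul _),
          lintegral_const_mul _ hΦf, lintegral_const_mul _ hΦg]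
    _ ≤ ∫⁻ t in Ioo (0:ℝ) 1, volume {x | ENNReal.ofReal t < h x} := by
        apply setLIntegral_mono' measurableSet_Ioo
        intro t ht
        exact hkey t ht
    _ = ∫⁻ x, h x := (cake_le_one h hhm hhb).symm

lemma pl_wrapper {l : ℝ} (hl : l ∈ Set.Ioo (0:ℝ) 1) (f g h : ℝ → ℝ≥0∞) (C D : ℝ≥0∞)
    (hC : C ≠ ⊤) (hD : D ≠ ⊤)
    (hfm : Measurable f) (hgm : Measurable g) (hhm : Measurable h)
    (hfb : ∀ x, f x ≤ C) (hgb : ∀ x, g x ≤ D)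
    (hfI : ∫⁻ x, f x ≠ ⊤) (hgI : ∫⁻ x, g x ≠ ⊤)
    (hc : ∀ x y, f x ^ l * g y ^ (1 - l) ≤ h (l * x + (1 - l) * y)) :
    (∫⁻ x, f x) ^ l * (∫⁻ x, g x) ^ (1 - l) ≤ ∫⁻ x, h x := by
  obtain ⟨hl0, hl1⟩ := hl
  have h1l : (0:ℝ) < 1 - l := by linarith
  set Mf := ⨆ x, f x with hMf
  set Mg := ⨆ x, g x with hMg
  by_cases hMf0 : Mf = 0
  · have : ∫⁻ x, f x = 0 := by
      have : ∀ x, f x = 0 := fun x => le_antisymm ((le_iSup f x).trans hMf0.le) zero_le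
      simp [lintegral_congr this]
    rw [this, ENNReal.zero_rpow_of_pos hl0, zero_mul]
    exact zero_le
  by_cases hMg0 : Mg = 0
  · have : ∫⁻ x, g x = 0 := by
      have : ∀ x, g x = 0 := fun x => le_antisymm ((le_iSup g x).trans hMg0.le) zero_le
      simp [lintegral_congr this]
    rw [this, ENNReal.zero_rpow_of_pos h1l, mul_zero]
    exact zero_le
  have hMfT : Mf ≠ ⊤ := ne_top_of_le_ne_top hC (iSup_le hfb)
  have hMgT : Mg ≠ ⊤ := ne_top_of_le_ne_top hD (iSup_le hgb)
  set N := Mf ^ l * Mg ^ (1 - l) with hN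
  have hMfl0 : Mf ^ l ≠ 0 := (ENNReal.rpow_pos (pos_iff_ne_zero.mpr hMf0) hMfT).ne'
  have hMgl0 : Mg ^ (1 - l) ≠ 0 := (ENNReal.rpow_pos (pos_iff_ne_zero.mpr hMg0) hMgT).ne'
  have hMflT : Mf ^ l ≠ ⊤ := ENNReal.rpow_ne_top_of_nonneg hl0.le hMfT
  have hMglT : Mg ^ (1 - l) ≠ ⊤ := ENNReal.rpow_ne_top_of_nonneg h1l.le hMgT
  have hN0 : N ≠ 0 := mul_ne_zero hMfl0 hMgl0
  have hNT : N ≠ ⊤ := ENNReal.mul_ne_top hMflT hMglT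
  have hdd : ∀ a c : ℝ≥0∞, a / Mf ^ l * (c / Mg ^ (1 - l)) = a * c / N := by
    intro a c
    rw [hN, div_eq_mul_inv, div_eq_mul_inv, div_eq_mul_inv,
      ENNReal.mul_inv (Or.inl hMfl0) (Or.inl hMflT)]
    ring
  set F := fun x => f x / Mf with hF
  set G := fun x => g x / Mg with hG
  set H := fun x => min (h x / N) 1 with hH
  have hFb : ∀ x, F x ≤ 1 := fun x =>
    ENNReal.div_le_of_le_mul (by rw [one_mul]; exact le_iSup f x)
  have hGb : ∀ x, G x ≤ 1 := fun x =>
    ENNReal.div_le_of_le_mul (by rw [one_mul]; exact le_iSup g x)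
  have hHb : ∀ x, H x ≤ 1 := fun x => min_le_right _ _
  have hFs : ∀ t : ℝ, t < 1 → ∃ x, ENNReal.ofReal t < F x := by
    intro t ht
    have h1 : ENNReal.ofReal t * Mf < Mf := by
      rcases le_or_gt t 0 with h' | h'
      · rw [ENNReal.ofReal_eq_zero.mpr h', zero_mul]
        exact pos_iff_ne_zero.mpr hMf0
      · apply ENNReal.mul_lt_of_lt_div
        rw [ENNReal.div_self hMf0 hMfT]
        exact ENNReal.ofReal_lt_one.mpr ht
    obtain ⟨x, hx⟩ := lt_iSup_iff.mp h1
    exact ⟨x, (ENNReal.lt_div_iff_mul_lt (Or.inl hMf0) (Or.inl hMfT)).mpr hx⟩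
  have hGs : ∀ t : ℝ, t < 1 → ∃ x, ENNReal.ofReal t < G x := by
    intro t ht
    have h1 : ENNReal.ofReal t * Mg < Mg := by
      rcases le_or_gt t 0 with h' | h'
      · rw [ENNReal.ofReal_eq_zero.mpr h', zero_mul]
        exact pos_iff_ne_zero.mpr hMg0
      · apply ENNReal.mul_lt_of_lt_div
        rw [ENNReal.div_self hMg0 hMgT]
        exact ENNReal.ofReal_lt_one.mpr ht
    obtain ⟨x, hx⟩ := lt_iSup_iff.mp h1
    exact ⟨x, (ENNReal.lt_div_iff_mul_lt (Or.inl hMg0) (Or.inl hMgT)).mpr hx⟩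
  have hFI : ∫⁻ x, F x = (∫⁻ x, f x) / Mf := by
    simp only [hF, div_eq_mul_inv]
    exact lintegral_mul_const _ hfm
  have hGI : ∫⁻ x, G x = (∫⁻ x, g x) / Mg := by
    simp only [hG, div_eq_mul_inv]
    exact lintegral_mul_const _ hgm
  have hcomb : ∀ x y, F x ^ l * G y ^ (1 - l) ≤ H (l * x + (1 - l) * y) := by
    intro x y
    have e : F x ^ l * G y ^ (1 - l) = (f x ^ l * g y ^ (1 - l)) / N := by
      rw [hF, hG, hN, ENNReal.div_rpow_of_nonneg _ _ hl0.le,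
        ENNReal.div_rpow_of_nonneg _ _ h1l.le, hdd]
    rw [e, hH]
    apply le_min
    · exact ENNReal.div_le_div_right (hc x y) _
    · calc (f x ^ l * g y ^ (1 - l)) / N ≤ N / N := by
            apply ENNReal.div_le_div_right
            exact mul_le_mul' (ENNReal.rpow_le_rpow (le_iSup f x) hl0.le)
              (ENNReal.rpow_le_rpow (le_iSup g y) h1l.le)
        _ ≤ 1 := ENNReal.div_self_le_one
  have key := pl_norm ⟨hl0, hl1⟩ F G H
    (hfm.div measurable_const) (hgm.div measurable_const)
    ((hhm.div measurable_const).min measurable_const)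
    hFb hGb hHb hFs hGs
    (by rw [hFI]; exact (ENNReal.div_lt_top hfI hMf0).ne)
    (by rw [hGI]; exact (ENNReal.div_lt_top hgI hMg0).ne)
    hcomb
  rw [hFI, hGI] at key
  have hHle : ∫⁻ x, H x ≤ (∫⁻ x, h x) / N := by
    calc ∫⁻ x, H x ≤ ∫⁻ x, h x / N := lintegral_mono fun x => min_le_left _ _
      _ = (∫⁻ x, h x) / N := by
          simp only [div_eq_mul_inv]; exact lintegral_mul_const _ hhm
  have key2 : ((∫⁻ x, f x) / Mf) ^ l * ((∫⁻ x, g x) / Mg) ^ (1 - l) ≤ (∫⁻ x, h x) / N :=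
    key.trans hHle
  have e2 : ((∫⁻ x, f x) / Mf) ^ l * ((∫⁻ x, g x) / Mg) ^ (1 - l)
      = ((∫⁻ x, f x) ^ l * (∫⁻ x, g x) ^ (1 - l)) / N := by
    rw [ENNReal.div_rpow_of_nonneg _ _ hl0.le, ENNReal.div_rpow_of_nonneg _ _ h1l.le, hdd]
  rw [e2] at key2
  have := mul_le_mul_left key2 N
  rwa [ENNReal.div_mul_cancel hN0 hNT, ENNReal.div_mul_cancel hN0 hNT] at this

lemma lintegral_cov_exp (g : ℝ → ℝ≥0∞) :
    ∫⁻ r in Ioi (0:ℝ), g r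
      = ∫⁻ u, ENNReal.ofReal (Real.exp u) * g (Real.exp u) := by
  have himg : Real.exp '' univ = Ioi (0:ℝ) := by
    rw [image_univ, Real.range_exp]
  have h := lintegral_image_eq_lintegral_abs_det_fderiv_mul (volume : Measure ℝ)
    (MeasurableSet.univ)
    (f := Real.exp)
    (f' := fun u => (1 : ℝ →L[ℝ] ℝ).smulRight (Real.exp u))
    (fun x _ => (Real.hasDerivAt_exp x).hasDerivWithinAt.hasFDerivWithinAt)
    (Real.exp_injective.injOn) g
  rw [himg] at h
  rw [h]
  simp only [ContinuousLinearMap.smulRight_one_eq_toSpanSingleton, ContinuousLinearMap.det_toSpanSingleton, Measure.restrict_univ]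
  apply lintegral_congr
  intro u
  rw [abs_of_pos (Real.exp_pos u)]

lemma lint_exp_tail {a : ℝ} (ha : 0 < a) (t : ℝ) :
    ∫⁻ r in Ioi t, ENNReal.ofReal (a * Real.exp (-(a * r)))
      = ENNReal.ofReal (Real.exp (-(a * t))) := by
  have hint : IntegrableOn (fun r => a * Real.exp (-(a * r))) (Ioi t) := by
    have := (exp_neg_integrableOn_Ioi t ha).const_mul a
    simpa only [neg_mul, IntegrableOn] using this
  have hval : ∫ r in Ioi t, a * Real.exp (-(a * r)) = Real.exp (-(a * t)) := by
    have hderiv : ∀ r ∈ Ioi t, HasDerivAt (fun r => -Real.exp (-(a * r)))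
        (a * Real.exp (-(a * r))) r := by
      intro r _
      have h1 : HasDerivAt (fun r : ℝ => -(a * r)) (-a) r := by
        simpa [Pi.neg_def] using ((hasDerivAt_id r).const_mul a).neg
      have h2 := (Real.hasDerivAt_exp (-(a * r))).comp r h1
      have h3 : HasDerivAt (fun r => -Real.exp (-(a * r))) (-(Real.exp (-(a * r)) * -a)) r := h2.neg
      convert h3 using 1
      ring
    have htend : Tendsto (fun r => -Real.exp (-(a * r))) atTop (nhds 0) := by
      rw [← neg_zero]
      apply Tendsto.neg
      apply Real.tendsto_exp_atBot.comp
      have : Tendsto (fun r : ℝ => a * r) atTop atTop :=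
        Tendsto.const_mul_atTop ha tendsto_id
      have h4 : Tendsto (fun r : ℝ => -(a * r)) atTop atBot := tendsto_neg_atBot_iff.mpr this
      exact h4
    have := integral_Ioi_of_hasDerivAt_of_tendsto
      (((Real.continuous_exp.comp (continuous_const.mul continuous_id).neg).neg).continuousWithinAt)
      hderiv hint htend
    rw [this]; simp
  rw [← hval]
  rw [ofReal_integral_eq_lintegral_ofReal hint
    (Filter.Eventually.of_forall fun r => by positivity)]

lemma rep_lemma {X : Type*} [MeasurableSpace X] (μ : Measure X) {φ : X → ℝ}
    (hφm : Measurable φ) (hφ0 : ∀ x, 0 ≤ φ x) {S : Set X} (hS : MeasurableSet S)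
    (hfin : μ S ≠ ⊤) {a : ℝ} (ha : 0 < a) :
    ∫⁻ x in S, ENNReal.ofReal (Real.exp (-(a * φ x))) ∂μ
      = ∫⁻ u, ENNReal.ofReal (Real.exp u)
          * (ENNReal.ofReal (a * Real.exp (-(a * Real.exp u)))
            * μ (S ∩ {x | φ x ≤ Real.exp u})) := by
  set W : ℝ → ℝ≥0∞ := fun r => ENNReal.ofReal (a * Real.exp (-(a * r))) with hW
  have hWm : Measurable W := by
    apply ENNReal.measurable_ofReal.comp
    fun_prop
  set k : X → ℝ → ℝ≥0∞ := fun x r => if φ x ≤ r then W r else 0 with hk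
  have claim1 : ∀ x : X, ∫⁻ r in Ioi (0:ℝ), k x r = ENNReal.ofReal (Real.exp (-(a * φ x))) := by
    intro x
    have he : (fun r => k x r) = (Ici (φ x)).indicator W := by
      ext r; simp [hk, Set.indicator_apply, mem_Ici]
    rw [he, lintegral_indicator measurableSet_Ici, Measure.restrict_restrict measurableSet_Ici]
    have hae : (Ici (φ x) ∩ Ioi (0:ℝ) : Set ℝ) =ᵐ[volume] (Ioi (φ x) : Set ℝ) := by
      apply MeasureTheory.ae_eq_set.mpr
      constructor
      · have hsub : (Ici (φ x) ∩ Ioi (0:ℝ)) \ Ioi (φ x) ⊆ {φ x} := by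
          rintro r ⟨⟨h1, _⟩, h3⟩
          simp only [mem_Ioi, not_lt] at h3
          exact mem_singleton_iff.mpr (le_antisymm h3 h1)
        exact measure_mono_null hsub (measure_singleton _)
      · have hsub : Ioi (φ x) ⊆ Ici (φ x) ∩ Ioi (0:ℝ) := fun r hr =>
          ⟨mem_Ici.mpr (le_of_lt hr), lt_of_le_of_lt (hφ0 x) hr⟩
        rw [diff_eq_empty.mpr hsub]
        simp
    rw [Measure.restrict_congr_set hae, lint_exp_tail ha]
  -- Tonelli
  haveI : IsFiniteMeasure (μ.restrict S) :=
    ⟨by rwa [Measure.restrict_apply_univ, lt_top_iff_ne_top]⟩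
  have hkm : Measurable (Function.uncurry k) := by
    apply Measurable.ite
    · exact measurableSet_le (hφm.comp measurable_fst) measurable_snd
    · exact hWm.comp measurable_snd
    · exact measurable_const
  calc ∫⁻ x in S, ENNReal.ofReal (Real.exp (-(a * φ x))) ∂μ
      = ∫⁻ x, (∫⁻ r in Ioi (0:ℝ), k x r) ∂(μ.restrict S) := by
        exact (lintegral_congr claim1).symm
    _ = ∫⁻ r in Ioi (0:ℝ), ∫⁻ x, k x r ∂(μ.restrict S) := by
        exact lintegral_lintegral_swap hkm.aemeasurable
    _ = ∫⁻ r in Ioi (0:ℝ), W r * μ (S ∩ {x | φ x ≤ r}) := by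
        apply lintegral_congr
        intro r
        have he : (fun x => k x r) = ({x | φ x ≤ r}).indicator (fun _ => W r) := by
          ext x; simp [hk, Set.indicator_apply]
        rw [he, lintegral_indicator (measurableSet_le hφm measurable_const),
          setLIntegral_const, Measure.restrict_apply (measurableSet_le hφm measurable_const),
          inter_comm]
    _ = ∫⁻ u, ENNReal.ofReal (Real.exp u)
          * (W (Real.exp u) * μ (S ∩ {x | φ x ≤ Real.exp u})) :=
        lintegral_cov_exp _

lemma scalar_ineq {l a₁ a₂ : ℝ} (hl : l ∈ Set.Ioo (0:ℝ) 1) (ha₁ : 0 < a₁) (ha₂ : 0 < a₂)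
    (u v : ℝ) :
    (Real.exp u * (a₁ * Real.exp (-(a₁ * Real.exp u)))) ^ l
      * (Real.exp v * (a₂ * Real.exp (-(a₂ * Real.exp v)))) ^ (1 - l)
    ≤ Real.exp (l * u + (1 - l) * v)
      * ((a₁ ^ l * a₂ ^ (1 - l))
        * Real.exp (-((a₁ ^ l * a₂ ^ (1 - l)) * Real.exp (l * u + (1 - l) * v)))) := by
  obtain ⟨hl0, hl1⟩ := hl
  have h1l : (0:ℝ) < 1 - l := by linarith
  set X := a₁ * Real.exp u with hX
  set Y := a₂ * Real.exp v with hY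
  set c := a₁ ^ l * a₂ ^ (1 - l) with hc
  set w := l * u + (1 - l) * v with hw
  have hXpos : 0 < X := by positivity
  have hYpos : 0 < Y := by positivity
  have e1 : (Real.exp u * (a₁ * Real.exp (-X))) ^ l
      = a₁ ^ l * Real.exp (u * l) * Real.exp (-X * l) := by
    rw [Real.mul_rpow (Real.exp_pos _).le (by positivity),
      Real.mul_rpow ha₁.le (Real.exp_pos _).le, ← Real.exp_mul, ← Real.exp_mul]
    ring
  have e2 : (Real.exp v * (a₂ * Real.exp (-Y))) ^ (1 - l)
      = a₂ ^ (1 - l) * Real.exp (v * (1 - l)) * Real.exp (-Y * (1 - l)) := by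
    rw [Real.mul_rpow (Real.exp_pos _).le (by positivity),
      Real.mul_rpow ha₂.le (Real.exp_pos _).le, ← Real.exp_mul, ← Real.exp_mul]
    ring
  have key : c * Real.exp w ≤ l * X + (1 - l) * Y := by
    have hXl : X ^ l = a₁ ^ l * Real.exp (u * l) := by
      rw [hX, Real.mul_rpow ha₁.le (Real.exp_pos _).le, ← Real.exp_mul]
    have hYl : Y ^ (1 - l) = a₂ ^ (1 - l) * Real.exp (v * (1 - l)) := by
      rw [hY, Real.mul_rpow ha₂.le (Real.exp_pos _).le, ← Real.exp_mul]
    have hcw : c * Real.exp w = X ^ l * Y ^ (1 - l) := by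
      rw [hXl, hYl, hw, hc, show l * u + (1 - l) * v = u * l + v * (1 - l) by ring,
        Real.exp_add]
      ring
    rw [hcw]
    exact Real.geom_mean_le_arith_mean2_weighted hl0.le h1l.le hXpos.le hYpos.le (by ring)
  calc (Real.exp u * (a₁ * Real.exp (-X))) ^ l * (Real.exp v * (a₂ * Real.exp (-Y))) ^ (1 - l)
      = c * Real.exp (u * l + v * (1 - l)) * Real.exp (-X * l + -Y * (1 - l)) := by
        rw [e1, e2, hc, Real.exp_add (u * l) (v * (1 - l)), Real.exp_add (-X * l) (-Y * (1 - l))]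
        ring
    _ ≤ c * Real.exp (u * l + v * (1 - l)) * Real.exp (-(c * Real.exp w)) := by
        apply mul_le_mul_of_nonneg_left _ (by positivity)
        apply Real.exp_le_exp.mpr
        nlinarith [key]
    _ = Real.exp w * (c * Real.exp (-(c * Real.exp w))) := by
        rw [show u * l + v * (1 - l) = w by rw [hw]; ring]
        ring

lemma zero_mem_of_symm {n : ℕ} {K : Set (EuclideanSpace ℝ (Fin n))}
    (hconv : Convex ℝ K) (hne : K.Nonempty) (hs : K = -K) : (0 : EuclideanSpace ℝ (Fin n)) ∈ K := by
  obtain ⟨y, hy⟩ := hne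
  have hny : -y ∈ K := by
    rw [hs]
    exact Set.neg_mem_neg.mpr hy
  have := hconv hy hny (by norm_num : (0:ℝ) ≤ 1/2) (by norm_num : (0:ℝ) ≤ 1/2) (by norm_num)
  simpa [smul_neg] using this

lemma suppFun_nonneg {n : ℕ} {K : Set (EuclideanSpace ℝ (Fin n))}
    (hK : IsCompact K) (h0 : (0 : EuclideanSpace ℝ (Fin n)) ∈ K)
    (u : EuclideanSpace ℝ (Fin n)) : 0 ≤ suppFun K u := by
  have hcont : Continuous fun y : EuclideanSpace ℝ (Fin n) => (inner ℝ u y : ℝ) :=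
    continuous_const.inner continuous_id
  have hbdd : BddAbove ((fun y => (inner ℝ u y : ℝ)) '' K) := (hK.image hcont).bddAbove
  have : (0:ℝ) ∈ (fun y => (inner ℝ u y : ℝ)) '' K := ⟨0, h0, by simp⟩
  exact le_csSup hbdd this

lemma suppFun_le {n : ℕ} {K : Set (EuclideanSpace ℝ (Fin n))} {R : ℝ}
    (h0 : (0 : EuclideanSpace ℝ (Fin n)) ∈ K) (hKR : K ⊆ Metric.closedBall 0 R)
    {u : EuclideanSpace ℝ (Fin n)} (hu : ‖u‖ = 1) : suppFun K u ≤ R := by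
  apply csSup_le (Set.Nonempty.image _ ⟨0, h0⟩)
  rintro _ ⟨y, hy, rfl⟩
  calc (inner ℝ u y : ℝ) ≤ ‖u‖ * ‖y‖ := real_inner_le_norm u y
    _ = ‖y‖ := by rw [hu, one_mul]
    _ ≤ R := mem_closedBall_zero_iff.mp (hKR hy)

lemma logComb_isClosed {n : ℕ} (lam : ℝ) (K L : Set (EuclideanSpace ℝ (Fin n))) :
    IsClosed (logComb lam K L) := by
  have : logComb lam K L = ⋂ (u : EuclideanSpace ℝ (Fin n)), ⋂ (_ : ‖u‖ = 1),
      {x : EuclideanSpace ℝ (Fin n) |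
        (inner ℝ x u : ℝ) ≤ suppFun K u ^ lam * suppFun L u ^ (1 - lam)} := by
    ext x
    simp [logComb, Set.mem_iInter]
  rw [this]
  exact isClosed_iInter fun u => isClosed_iInter fun _ =>
    isClosed_le (continuous_id.inner continuous_const) continuous_const

lemma logComb_isCompact {n : ℕ} {lam : ℝ} (hlam : lam ∈ Set.Ioo (0:ℝ) 1)
    {K L : Set (EuclideanSpace ℝ (Fin n))}
    (hKc : IsCompact K) (hLc : IsCompact L)
    (h0K : (0 : EuclideanSpace ℝ (Fin n)) ∈ K) (h0L : (0 : EuclideanSpace ℝ (Fin n)) ∈ L) :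
    IsCompact (logComb lam K L) := by
  obtain ⟨RK, hRK⟩ := hKc.isBounded.subset_closedBall 0
  obtain ⟨RL, hRL⟩ := hLc.isBounded.subset_closedBall 0
  have hRK0 : 0 ≤ RK := by
    have := hRK h0K
    simpa using this
  have hRL0 : 0 ≤ RL := by
    have := hRL h0L
    simpa using this
  set C := RK ^ lam * RL ^ (1 - lam) with hC
  have hC0 : 0 ≤ C := by positivity
  have hsub : logComb lam K L ⊆ Metric.closedBall 0 C := by
    intro x hx
    rw [mem_closedBall_zero_iff]
    rcases eq_or_ne x 0 with rfl | hx0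
    · simpa using hC0
    · set u := ‖x‖⁻¹ • x with hu
      have hunorm : ‖u‖ = 1 := norm_smul_inv_norm hx0
      have hinner : (inner ℝ x u : ℝ) = ‖x‖ := by
        rw [hu, real_inner_smul_right, real_inner_self_eq_norm_sq]
        have hxne : ‖x‖ ≠ 0 := norm_ne_zero_iff.mpr hx0
        field_simp
      have hle := hx u hunorm
      rw [hinner] at hle
      calc ‖x‖ ≤ suppFun K u ^ lam * suppFun L u ^ (1 - lam) := hle
        _ ≤ C := by
          rw [hC]
          apply mul_le_mul
          · exact Real.rpow_le_rpow (suppFun_nonneg hKc h0K u) (suppFun_le h0K hRK hunorm)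
              hlam.1.le
          · exact Real.rpow_le_rpow (suppFun_nonneg hLc h0L u) (suppFun_le h0L hRL hunorm)
              (by linarith [hlam.2])
          · exact Real.rpow_nonneg (suppFun_nonneg hLc h0L u) _
          · positivity
  exact (isCompact_closedBall (0 : EuclideanSpace ℝ (Fin n)) C).of_isClosed_subset
    (logComb_isClosed lam K L) hsub

/-- Lemma 3.3: from a log-Brunn-Minkowski-type hypothesis on sublevel truncations
to an integral inequality for exponential weights. -/
theorem logBM_from_sublevel_hypothesis (n : ℕ)
    (lam a₁ a₂ : ℝ) (hlam : lam ∈ Set.Ioo (0:ℝ) 1) (ha₁ : 0 < a₁) (ha₂ : 0 < a₂)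
    (μ : Measure (EuclideanSpace ℝ (Fin n))) [IsFiniteMeasureOnCompacts μ]
    (φ : EuclideanSpace ℝ (Fin n) → ℝ) (hφ0 : ∀ x, 0 ≤ φ x)
    (heven : ∀ x, φ (-x) = φ x) (hconv : ConvexOn ℝ Set.univ φ)
    (K L : Set (EuclideanSpace ℝ (Fin n)))
    (hK : IsConvexBody K) (hKs : K = -K) (hL : IsConvexBody L) (hLs : L = -L)
    (hyp : ∀ r₁ r₂ : ℝ, 0 < r₁ → 0 < r₂ →
      μ (K ∩ {x | φ x ≤ r₁}) ^ lam * μ (L ∩ {x | φ x ≤ r₂}) ^ (1 - lam)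
        ≤ μ (logComb lam K L ∩ {x | φ x ≤ r₁ ^ lam * r₂ ^ (1 - lam)})) :
    (∫ x in K, Real.exp (-(a₁ * φ x)) ∂μ) ^ lam *
        (∫ x in L, Real.exp (-(a₂ * φ x)) ∂μ) ^ (1 - lam)
      ≤ ∫ x in logComb lam K L, Real.exp (-((a₁ ^ lam * a₂ ^ (1 - lam)) * φ x)) ∂μ := by
  obtain ⟨hl0, hl1⟩ := hlam
  have h1l : (0:ℝ) < 1 - lam := by linarith
  set M := logComb lam K L with hM
  set c := a₁ ^ lam * a₂ ^ (1 - lam) with hc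
  have hc0 : 0 < c := by positivity
  -- continuity and measurability of φ
  have hφcont : Continuous φ := by
    rw [← continuousOn_univ]
    exact hconv.continuousOn isOpen_univ
  have hφm : Measurable φ := hφcont.measurable
  -- geometry
  have h0K : (0 : EuclideanSpace ℝ (Fin n)) ∈ K :=
    zero_mem_of_symm hK.1 (hK.2.2.mono interior_subset) hKs
  have h0L : (0 : EuclideanSpace ℝ (Fin n)) ∈ L :=
    zero_mem_of_symm hL.1 (hL.2.2.mono interior_subset) hLs
  have hMc : IsCompact M := logComb_isCompact ⟨hl0, hl1⟩ hK.2.1 hL.2.1 h0K h0L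
  have hKm : MeasurableSet K := hK.2.1.measurableSet
  have hLm : MeasurableSet L := hL.2.1.measurableSet
  have hMm : MeasurableSet M := hMc.measurableSet
  have hKfin : μ K ≠ ⊤ := hK.2.1.measure_lt_top.ne
  have hLfin : μ L ≠ ⊤ := hL.2.1.measure_lt_top.ne
  have hMfin : μ M ≠ ⊤ := hMc.measure_lt_top.ne
  -- representations
  have repK := rep_lemma μ hφm hφ0 hKm hKfin ha₁
  have repL := rep_lemma μ hφm hφ0 hLm hLfin ha₂
  have repM := rep_lemma μ hφm hφ0 hMm hMfin hc0
  set F : ℝ → ℝ≥0∞ := fun u => ENNReal.ofReal (Real.exp u)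
      * (ENNReal.ofReal (a₁ * Real.exp (-(a₁ * Real.exp u)))
        * μ (K ∩ {x | φ x ≤ Real.exp u})) with hF
  set G : ℝ → ℝ≥0∞ := fun u => ENNReal.ofReal (Real.exp u)
      * (ENNReal.ofReal (a₂ * Real.exp (-(a₂ * Real.exp u)))
        * μ (L ∩ {x | φ x ≤ Real.exp u})) with hG
  set H : ℝ → ℝ≥0∞ := fun u => ENNReal.ofReal (Real.exp u)
      * (ENNReal.ofReal (c * Real.exp (-(c * Real.exp u)))
        * μ (M ∩ {x | φ x ≤ Real.exp u})) with hH
  -- scalar facts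
  have hscal_le_one : ∀ (a u : ℝ), 0 < a → Real.exp u * (a * Real.exp (-(a * Real.exp u))) ≤ 1 := by
    intro a u ha
    have hz : Real.exp u * (a * Real.exp (-(a * Real.exp u)))
        = (a * Real.exp u) * Real.exp (-(a * Real.exp u)) := by ring
    rw [hz, Real.exp_neg, ← div_eq_mul_inv, div_le_one (Real.exp_pos _)]
    linarith [Real.add_one_le_exp (a * Real.exp u)]
  -- combining the two scalar ofReal factors
  have hsplit : ∀ (a u : ℝ) (m : ℝ≥0∞), 0 < a →
      ENNReal.ofReal (Real.exp u) * (ENNReal.ofReal (a * Real.exp (-(a * Real.exp u))) * m)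
        = ENNReal.ofReal (Real.exp u * (a * Real.exp (-(a * Real.exp u)))) * m := by
    intro a u m ha
    rw [← mul_assoc, ← ENNReal.ofReal_mul (Real.exp_pos u).le]
  -- bounds
  have hFb : ∀ u, F u ≤ μ K := by
    intro u
    rw [hF]
    simp only []
    rw [hsplit a₁ u _ ha₁]
    calc ENNReal.ofReal (Real.exp u * (a₁ * Real.exp (-(a₁ * Real.exp u))))
          * μ (K ∩ {x | φ x ≤ Real.exp u})
        ≤ 1 * μ K := mul_le_mul' (ENNReal.ofReal_le_one.mpr (hscal_le_one a₁ u ha₁))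
          (measure_mono Set.inter_subset_left)
      _ = μ K := one_mul _
  have hGb : ∀ u, G u ≤ μ L := by
    intro u
    rw [hG]
    simp only []
    rw [hsplit a₂ u _ ha₂]
    calc ENNReal.ofReal (Real.exp u * (a₂ * Real.exp (-(a₂ * Real.exp u))))
          * μ (L ∩ {x | φ x ≤ Real.exp u})
        ≤ 1 * μ L := mul_le_mul' (ENNReal.ofReal_le_one.mpr (hscal_le_one a₂ u ha₂))
          (measure_mono Set.inter_subset_left)
      _ = μ L := one_mul _
  -- measurability
  have hmeas : ∀ (a : ℝ) (S : Set (EuclideanSpace ℝ (Fin n))), Measurable (fun u : ℝ =>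
      ENNReal.ofReal (Real.exp u)
        * (ENNReal.ofReal (a * Real.exp (-(a * Real.exp u)))
          * μ (S ∩ {x | φ x ≤ Real.exp u}))) := by
    intro a S
    have h1 : Measurable fun u : ℝ => ENNReal.ofReal (Real.exp u) :=
      ENNReal.measurable_ofReal.comp Real.measurable_exp
    have h2 : Measurable fun u : ℝ => ENNReal.ofReal (a * Real.exp (-(a * Real.exp u))) := by
      apply ENNReal.measurable_ofReal.comp
      fun_prop
    have h3 : Measurable fun u : ℝ => μ (S ∩ {x | φ x ≤ Real.exp u}) := by
      apply Monotone.measurable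
      intro u v huv
      exact measure_mono (Set.inter_subset_inter_right _ fun x hx =>
        le_trans hx (Real.exp_le_exp.mpr huv))
    exact h1.mul (h2.mul h3)
  -- finiteness of integrals
  have hbound : ∀ (a : ℝ) (S : Set (EuclideanSpace ℝ (Fin n))), 0 < a →
      ∫⁻ x in S, ENNReal.ofReal (Real.exp (-(a * φ x))) ∂μ ≤ μ S := by
    intro a S ha
    calc ∫⁻ x in S, ENNReal.ofReal (Real.exp (-(a * φ x))) ∂μ
        ≤ ∫⁻ _ in S, 1 ∂μ := by
          apply lintegral_mono
          intro x
          apply ENNReal.ofReal_le_one.mpr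
          apply Real.exp_le_one_iff.mpr
          have := hφ0 x
          nlinarith
      _ = μ S := by rw [setLIntegral_one]
  have hFI : ∫⁻ u, F u ≠ ⊤ := by
    rw [← repK]
    exact (lt_of_le_of_lt (hbound a₁ K ha₁) hK.2.1.measure_lt_top).ne
  have hGI : ∫⁻ u, G u ≠ ⊤ := by
    rw [← repL]
    exact (lt_of_le_of_lt (hbound a₂ L ha₂) hL.2.1.measure_lt_top).ne
  -- combination inequality
  have hcomb : ∀ u v, F u ^ lam * G v ^ (1 - lam) ≤ H (lam * u + (1 - lam) * v) := by
    intro u v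
    set w := lam * u + (1 - lam) * v with hw
    rw [hF, hG, hH]
    simp only []
    rw [hsplit a₁ u _ ha₁, hsplit a₂ v _ ha₂, hsplit c w _ hc0]
    rw [ENNReal.mul_rpow_of_nonneg _ _ hl0.le, ENNReal.mul_rpow_of_nonneg _ _ h1l.le,
      mul_mul_mul_comm]
    apply mul_le_mul'
    · -- scalar part
      rw [ENNReal.ofReal_rpow_of_nonneg (by positivity) hl0.le,
        ENNReal.ofReal_rpow_of_nonneg (by positivity) h1l.le,
        ← ENNReal.ofReal_mul (by positivity)]
      apply ENNReal.ofReal_le_ofReal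
      exact scalar_ineq ⟨hl0, hl1⟩ ha₁ ha₂ u v
    · -- measure part
      have h := hyp (Real.exp u) (Real.exp v) (Real.exp_pos u) (Real.exp_pos v)
      have he : Real.exp u ^ lam * Real.exp v ^ (1 - lam) = Real.exp w := by
        rw [← Real.exp_mul, ← Real.exp_mul, ← Real.exp_add, hw]
        congr 1
        ring
      rw [he] at h
      exact h
  -- apply Prékopa–Leindler in dimension one
  have hPL := pl_wrapper ⟨hl0, hl1⟩ F G H (μ K) (μ L) hKfin hLfin
    (hmeas a₁ K) (hmeas a₂ L) (hmeas c M) hFb hGb hFI hGI hcomb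
  -- back to the measure integrals
  rw [← repK, ← repL, ← repM] at hPL
  -- convert Bochner integrals to lintegrals
  have hJM : ∫⁻ x in M, ENNReal.ofReal (Real.exp (-(c * φ x))) ∂μ ≠ ⊤ :=
    (lt_of_le_of_lt (hbound c M hc0) hMc.measure_lt_top).ne
  have hconv1 : ∫ x in K, Real.exp (-(a₁ * φ x)) ∂μ
      = (∫⁻ x in K, ENNReal.ofReal (Real.exp (-(a₁ * φ x))) ∂μ).toReal := by
    apply integral_eq_lintegral_of_nonneg_ae
    · exact Filter.Eventually.of_forall fun x => (Real.exp_pos _).le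
    · exact (Real.continuous_exp.comp (continuous_const.mul hφcont).neg).aestronglyMeasurable
  have hconv2 : ∫ x in L, Real.exp (-(a₂ * φ x)) ∂μ
      = (∫⁻ x in L, ENNReal.ofReal (Real.exp (-(a₂ * φ x))) ∂μ).toReal := by
    apply integral_eq_lintegral_of_nonneg_ae
    · exact Filter.Eventually.of_forall fun x => (Real.exp_pos _).le
    · exact (Real.continuous_exp.comp (continuous_const.mul hφcont).neg).aestronglyMeasurable
  have hconv3 : ∫ x in M, Real.exp (-(c * φ x)) ∂μ
      = (∫⁻ x in M, ENNReal.ofReal (Real.exp (-(c * φ x))) ∂μ).toReal := by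
    apply integral_eq_lintegral_of_nonneg_ae
    · exact Filter.Eventually.of_forall fun x => (Real.exp_pos _).le
    · exact (Real.continuous_exp.comp (continuous_const.mul hφcont).neg).aestronglyMeasurable
  rw [hconv1, hconv2, hconv3]
  rw [ENNReal.toReal_rpow, ENNReal.toReal_rpow, ← ENNReal.toReal_mul]
  exact ENNReal.toReal_mono hJM hPL
end
end

section
/- Fix a dimension n and let f : ℝⁿ → [0,∞) be a measurable, locally integrable function such that the logarithmic Brunn–Minkowski inequality holds for the density f: for all symmetric convex bodies K, L in ℝⁿ and all λ ∈ (0,1), ∫_{λ·K +₀ (1−λ)·L} f(x) dx ≥ (∫_K f(x) dx)^λ · (∫_L f(x) dx)^{1−λ}. Then for every invertible linear map T : ℝⁿ → ℝⁿ and all real numbers a₁,…,aₙ, the function ℝ ∋ t ↦ ∫_{B(t)} f(Tx) dx is log-concave, where B(t) = ∏_{i=1}^n [−e^{a_i t}, e^{a_i t}] (that is, B(t) = e^{At}C_n for the diagonal matrix A = diag(a₁,…,aₙ) and the cube C_n = [−1,1]ⁿ). -/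
open MeasureTheory Set Pointwise

noncomputable section

namespace LogBMAux

variable {n : ℕ}

def box (r : Fin n → ℝ) : Set (EuclideanSpace ℝ (Fin n)) := {x | ∀ i, |x i| ≤ r i}

lemma box_closed (r : Fin n → ℝ) : IsClosed (box r) := by
  have : box r = ⋂ i, {x : EuclideanSpace ℝ (Fin n) | |x i| ≤ r i} := by
    ext x; simp [box, Set.mem_iInter]
  rw [this]
  exact isClosed_iInter fun i =>
    isClosed_le (continuous_abs.comp (EuclideanSpace.proj i).continuous) continuous_const

lemma box_compact (r : Fin n → ℝ) : IsCompact (box r) := by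
  refine Metric.isCompact_of_isClosed_isBounded (box_closed r) ?_
  rw [isBounded_iff_forall_norm_le]
  refine ⟨Real.sqrt (∑ i, r i ^ 2), fun x hx => ?_⟩
  rw [EuclideanSpace.norm_eq]
  apply Real.sqrt_le_sqrt
  refine Finset.sum_le_sum fun i _ => ?_
  have := hx i
  calc ‖x i‖ ^ 2 = |x i| ^ 2 := by rw [Real.norm_eq_abs]
    _ ≤ (r i) ^ 2 := by
        apply pow_le_pow_left₀ (abs_nonneg _) this

lemma box_convex (r : Fin n → ℝ) : Convex ℝ (box r) := by
  intro x hx y hy a b ha hb hab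
  intro i
  have : (a • x + b • y) i = a * x i + b * y i := rfl
  rw [this]
  calc |a * x i + b * y i| ≤ |a * x i| + |b * y i| := abs_add_le _ _
    _ = a * |x i| + b * |y i| := by rw [abs_mul, abs_mul, abs_of_nonneg ha, abs_of_nonneg hb]
    _ ≤ a * r i + b * r i := by gcongr; exacts [hx i, hy i]
    _ = r i := by rw [← add_mul, hab, one_mul]

lemma box_neg (r : Fin n → ℝ) : box r = -(box r) := by
  ext x
  simp only [Set.mem_neg, box, Set.mem_setOf_eq]
  constructor <;> intro h i <;> simpa [abs_neg] using h i

lemma zero_mem_interior_box {r : Fin n → ℝ} (hr : ∀ i, 0 < r i) :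
    (0 : EuclideanSpace ℝ (Fin n)) ∈ interior (box r) := by
  have hopen : IsOpen {x : EuclideanSpace ℝ (Fin n) | ∀ i, |x i| < r i} := by
    have : {x : EuclideanSpace ℝ (Fin n) | ∀ i, |x i| < r i}
        = ⋂ i, {x : EuclideanSpace ℝ (Fin n) | |x i| < r i} := by
      ext x; simp [Set.mem_iInter]
    rw [this]
    exact isOpen_iInter_of_finite fun i =>
      isOpen_lt (continuous_abs.comp (EuclideanSpace.proj i).continuous) continuous_const
  apply interior_mono (show {x : EuclideanSpace ℝ (Fin n) | ∀ i, |x i| < r i} ⊆ box r from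
    fun x hx i => (hx i).le)
  rw [hopen.interior_eq]
  intro i
  simpa using hr i

lemma zero_mem_box {r : Fin n → ℝ} (hr : ∀ i, 0 < r i) :
    (0 : EuclideanSpace ℝ (Fin n)) ∈ box r :=
  fun i => by simpa using (hr i).le

lemma image_box_convexBody (T : EuclideanSpace ℝ (Fin n) ≃ₗ[ℝ] EuclideanSpace ℝ (Fin n))
    {r : Fin n → ℝ} (hr : ∀ i, 0 < r i) : IsConvexBody (⇑T '' box r) := by
  have hTc : Continuous ⇑T := T.toContinuousLinearEquiv.continuous
  refine ⟨?_, (box_compact r).image hTc, ?_⟩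
  · have := (box_convex r).linear_image (T : EuclideanSpace ℝ (Fin n) →ₗ[ℝ] EuclideanSpace ℝ (Fin n))
    simpa using this
  · refine ⟨T 0, ?_⟩
    have himg : ⇑T '' interior (box r) = interior (⇑T '' box r) := by
      have := T.toContinuousLinearEquiv.toHomeomorph.image_interior (box r)
      simpa using this
    rw [← himg]
    exact mem_image_of_mem _ (zero_mem_interior_box hr)

lemma image_box_symm (T : EuclideanSpace ℝ (Fin n) ≃ₗ[ℝ] EuclideanSpace ℝ (Fin n))
    (r : Fin n → ℝ) : ⇑T '' box r = -(⇑T '' box r) := by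
  ext x
  simp only [Set.mem_neg]
  constructor
  · rintro ⟨w, hw, rfl⟩
    refine ⟨-w, ?_, by simp⟩
    rw [box_neg r]; simpa using hw
  · rintro ⟨w, hw, hx⟩
    refine ⟨-w, ?_, ?_⟩
    · rw [box_neg r]; simpa using hw
    · show T (-w) = x
      have hx' : T w = -x := hx
      rw [map_neg, hx']; simp

lemma inner_image_le (T : EuclideanSpace ℝ (Fin n) ≃ₗ[ℝ] EuclideanSpace ℝ (Fin n))
    {r : Fin n → ℝ} (i : Fin n) (c σ : ℝ) (hc : 0 ≤ c) (hσ : |σ| = 1)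
    {z : ℝ} (hz : z ∈ (fun y => (inner ℝ (c • (LinearMap.adjoint
      (T.symm : EuclideanSpace ℝ (Fin n) →ₗ[ℝ] EuclideanSpace ℝ (Fin n))
      (EuclideanSpace.single i σ))) y : ℝ)) '' (⇑T '' box r)) :
    z ≤ c * r i := by
  obtain ⟨y, ⟨w, hw, rfl⟩, rfl⟩ := hz
  simp only [real_inner_smul_left, LinearMap.adjoint_inner_left]
  have h1 : (inner ℝ (EuclideanSpace.single i σ)
      ((T.symm : EuclideanSpace ℝ (Fin n) →ₗ[ℝ] EuclideanSpace ℝ (Fin n)) (T w)) : ℝ)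
      = σ * w i := by
    rw [EuclideanSpace.inner_single_left]; simp
  rw [h1]
  have h2 : σ * w i ≤ r i :=
    calc σ * w i ≤ |σ * w i| := le_abs_self _
      _ = |σ| * |w i| := abs_mul _ _
      _ = |w i| := by rw [hσ, one_mul]
      _ ≤ r i := hw i
  exact mul_le_mul_of_nonneg_left h2 hc

lemma suppFun_image_box_le (T : EuclideanSpace ℝ (Fin n) ≃ₗ[ℝ] EuclideanSpace ℝ (Fin n))
    {r : Fin n → ℝ} (hr : ∀ i, 0 < r i) (i : Fin n) (c σ : ℝ) (hc : 0 ≤ c) (hσ : |σ| = 1) :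
    suppFun (⇑T '' box r) (c • (LinearMap.adjoint
      (T.symm : EuclideanSpace ℝ (Fin n) →ₗ[ℝ] EuclideanSpace ℝ (Fin n))
      (EuclideanSpace.single i σ))) ≤ c * r i :=
  Real.sSup_le (fun _ hz => inner_image_le T i c σ hc hσ hz) (mul_nonneg hc (hr i).le)

lemma suppFun_image_box_nonneg (T : EuclideanSpace ℝ (Fin n) ≃ₗ[ℝ] EuclideanSpace ℝ (Fin n))
    {r : Fin n → ℝ} (hr : ∀ i, 0 < r i) (i : Fin n) (c σ : ℝ) (hc : 0 ≤ c) (hσ : |σ| = 1) :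
    0 ≤ suppFun (⇑T '' box r) (c • (LinearMap.adjoint
      (T.symm : EuclideanSpace ℝ (Fin n) →ₗ[ℝ] EuclideanSpace ℝ (Fin n))
      (EuclideanSpace.single i σ))) := by
  have hbdd : BddAbove ((fun y => (inner ℝ (c • (LinearMap.adjoint
      (T.symm : EuclideanSpace ℝ (Fin n) →ₗ[ℝ] EuclideanSpace ℝ (Fin n))
      (EuclideanSpace.single i σ))) y : ℝ)) '' (⇑T '' box r)) :=
    ⟨c * r i, fun _ hz => inner_image_le T i c σ hc hσ hz⟩
  have h0 : (0 : ℝ) ∈ (fun y => (inner ℝ (c • (LinearMap.adjoint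
      (T.symm : EuclideanSpace ℝ (Fin n) →ₗ[ℝ] EuclideanSpace ℝ (Fin n))
      (EuclideanSpace.single i σ))) y : ℝ)) '' (⇑T '' box r) :=
    ⟨T 0, ⟨0, zero_mem_box hr, rfl⟩, by simp⟩
  exact le_csSup hbdd h0

lemma logComb_subset (T : EuclideanSpace ℝ (Fin n) ≃ₗ[ℝ] EuclideanSpace ℝ (Fin n))
    (a : Fin n → ℝ) (s t lam : ℝ) (hlam : lam ∈ Set.Ioo (0:ℝ) 1) :
    logComb lam (⇑T '' box (fun i => Real.exp (a i * s))) (⇑T '' box (fun i => Real.exp (a i * t)))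
      ⊆ ⇑T '' box (fun i => Real.exp (a i * (lam * s + (1 - lam) * t))) := by
  intro x hx
  refine ⟨T.symm x, fun i => ?_, by simp⟩
  set A := (T.symm : EuclideanSpace ℝ (Fin n) →ₗ[ℝ] EuclideanSpace ℝ (Fin n))
  have key : ∀ σ : ℝ, |σ| = 1 → σ * (T.symm x) i ≤ Real.exp (a i * (lam * s + (1 - lam) * t)) := by
    intro σ hσ
    set v := LinearMap.adjoint A (EuclideanSpace.single i σ) with hv
    have hss : σ * σ = 1 := by nlinarith [sq_abs σ, hσ]
    have hv1 : (inner ℝ v (T (EuclideanSpace.single i σ)) : ℝ) = 1 := by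
      have hATe : A (T (EuclideanSpace.single i σ)) = EuclideanSpace.single i σ :=
        T.symm_apply_apply _
      rw [hv, LinearMap.adjoint_inner_left, hATe, EuclideanSpace.inner_single_left]
      simp [EuclideanSpace.single_apply, hss]
    have hvne : v ≠ 0 := by
      intro h; rw [h] at hv1; simp at hv1
    have hnv : 0 < ‖v‖ := norm_pos_iff.mpr hvne
    set c := ‖v‖⁻¹ with hcdef
    have hc : 0 < c := inv_pos.mpr hnv
    have hu : ‖c • v‖ = 1 := by
      rw [norm_smul, Real.norm_eq_abs, abs_of_pos hc, hcdef, inv_mul_cancel₀ hnv.ne']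
    have hlog := hx (c • v) hu
    have h1 := suppFun_image_box_le T (r := fun i => Real.exp (a i * s))
      (fun i => Real.exp_pos _) i c σ hc.le hσ
    have h2 := suppFun_image_box_le T (r := fun i => Real.exp (a i * t))
      (fun i => Real.exp_pos _) i c σ hc.le hσ
    have h1' := suppFun_image_box_nonneg T (r := fun i => Real.exp (a i * s))
      (fun i => Real.exp_pos _) i c σ hc.le hσ
    have h2' := suppFun_image_box_nonneg T (r := fun i => Real.exp (a i * t))
      (fun i => Real.exp_pos _) i c σ hc.le hσ
    have hrb : suppFun (⇑T '' box (fun i => Real.exp (a i * s))) (c • v) ^ lam *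
        suppFun (⇑T '' box (fun i => Real.exp (a i * t))) (c • v) ^ (1 - lam)
        ≤ (c * Real.exp (a i * s)) ^ lam * (c * Real.exp (a i * t)) ^ (1 - lam) := by
      apply mul_le_mul
      · exact Real.rpow_le_rpow h1' h1 hlam.1.le
      · exact Real.rpow_le_rpow h2' h2 (by linarith [hlam.2])
      · exact Real.rpow_nonneg h2' _
      · exact Real.rpow_nonneg (mul_nonneg hc.le (Real.exp_pos _).le) _
    have hcalc : (c * Real.exp (a i * s)) ^ lam * (c * Real.exp (a i * t)) ^ (1 - lam)
        = c * Real.exp (a i * (lam * s + (1 - lam) * t)) := by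
      rw [Real.mul_rpow hc.le (Real.exp_pos _).le, Real.mul_rpow hc.le (Real.exp_pos _).le]
      rw [← Real.exp_mul, ← Real.exp_mul]
      rw [show c ^ lam * Real.exp (a i * s * lam) * (c ^ (1 - lam) * Real.exp (a i * t * (1 - lam)))
        = (c ^ lam * c ^ (1 - lam)) * (Real.exp (a i * s * lam) * Real.exp (a i * t * (1 - lam))) by ring]
      rw [← Real.rpow_add hc, ← Real.exp_add]
      rw [show lam + (1 - lam) = 1 by ring, Real.rpow_one]
      congr 1
      ring_nf
    have hinner : (inner ℝ x (c • v) : ℝ) = c * (σ * (T.symm x) i) := by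
      rw [real_inner_smul_right, real_inner_comm, hv, LinearMap.adjoint_inner_left,
        EuclideanSpace.inner_single_left]
      simp [A]
    have hfinal : c * (σ * (T.symm x) i) ≤ c * Real.exp (a i * (lam * s + (1 - lam) * t)) := by
      rw [← hinner, ← hcalc]
      exact le_trans hlog hrb
    exact (mul_le_mul_iff_right₀ hc).mp hfinal
  have k1 := key 1 (by norm_num)
  have k2 := key (-1) (by norm_num)
  rw [one_mul] at k1
  rw [abs_le]
  exact ⟨by linarith, k1⟩

lemma cov (T : EuclideanSpace ℝ (Fin n) ≃ₗ[ℝ] EuclideanSpace ℝ (Fin n))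
    (f : EuclideanSpace ℝ (Fin n) → ℝ) (B : Set (EuclideanSpace ℝ (Fin n)))
    (hB : MeasurableSet B) :
    ∫ x in (⇑T '' B), f x
      = |LinearMap.det (T : EuclideanSpace ℝ (Fin n) →ₗ[ℝ] EuclideanSpace ℝ (Fin n))|
        * ∫ x in B, f (T x) := by
  have hderiv : ∀ x ∈ B, HasFDerivWithinAt (⇑T)
      (T.toContinuousLinearEquiv.toContinuousLinearMap) B x := fun x _ =>
    (T.toContinuousLinearEquiv.toContinuousLinearMap.hasFDerivAt).hasFDerivWithinAt
  rw [integral_image_eq_integral_abs_det_fderiv_smul volume hB hderiv (T.injective.injOn) f]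
  have hdet : (T.toContinuousLinearEquiv.toContinuousLinearMap).det
      = LinearMap.det (T : EuclideanSpace ℝ (Fin n) →ₗ[ℝ] EuclideanSpace ℝ (Fin n)) := rfl
  simp_rw [hdet, smul_eq_mul]
  rw [integral_const_mul]

end LogBMAux

open LogBMAux in
/-- Theorem 5.1 (iii): if the log-Brunn-Minkowski inequality holds for the density `f`, then
`t ↦ ∫_{e^{At}Cₙ} f(Tx) dx` is log-concave for every invertible linear `T` and diagonal `A`. -/
theorem logBM_implies_logconcave_on_boxes (n : ℕ)
    (f : EuclideanSpace ℝ (Fin n) → ℝ)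
    (hmeas : Measurable f) (hloc : LocallyIntegrable f volume) (hpos : ∀ x, 0 ≤ f x)
    (hLBM : ∀ K L : Set (EuclideanSpace ℝ (Fin n)),
      IsConvexBody K → K = -K → IsConvexBody L → L = -L →
      ∀ lam : ℝ, lam ∈ Set.Ioo (0:ℝ) 1 →
        (∫ x in K, f x) ^ lam * (∫ x in L, f x) ^ (1 - lam)
          ≤ ∫ x in logComb lam K L, f x) :
    ∀ T : EuclideanSpace ℝ (Fin n) ≃ₗ[ℝ] EuclideanSpace ℝ (Fin n),
    ∀ a : Fin n → ℝ, ∀ s t lam : ℝ, lam ∈ Set.Ioo (0:ℝ) 1 →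
      (∫ x in {x : EuclideanSpace ℝ (Fin n) | ∀ i, |x i| ≤ Real.exp (a i * s)}, f (T x)) ^ lam *
          (∫ x in {x : EuclideanSpace ℝ (Fin n) | ∀ i, |x i| ≤ Real.exp (a i * t)}, f (T x)) ^ (1 - lam)
        ≤ ∫ x in {x : EuclideanSpace ℝ (Fin n) |
            ∀ i, |x i| ≤ Real.exp (a i * (lam * s + (1 - lam) * t))}, f (T x) := by
  intro T a s t lam hlam
  set rs : Fin n → ℝ := fun i => Real.exp (a i * s) with hrs
  set rt : Fin n → ℝ := fun i => Real.exp (a i * t) with hrt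
  set rm : Fin n → ℝ := fun i => Real.exp (a i * (lam * s + (1 - lam) * t)) with hrm
  have hrs_pos : ∀ i, 0 < rs i := fun i => Real.exp_pos _
  have hrt_pos : ∀ i, 0 < rt i := fun i => Real.exp_pos _
  have hrm_pos : ∀ i, 0 < rm i := fun i => Real.exp_pos _
  -- identify the sets with boxes
  show (∫ x in box rs, f (T x)) ^ lam * (∫ x in box rt, f (T x)) ^ (1 - lam)
      ≤ ∫ x in box rm, f (T x)
  set d : ℝ := |LinearMap.det (T : EuclideanSpace ℝ (Fin n) →ₗ[ℝ] EuclideanSpace ℝ (Fin n))|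
    with hd
  have hd_pos : 0 < d := by
    rw [hd, abs_pos]
    exact (LinearEquiv.isUnit_det' T).ne_zero
  have hms : MeasurableSet (box rs) := (box_closed rs).measurableSet
  have hmt : MeasurableSet (box rt) := (box_closed rt).measurableSet
  have hmm : MeasurableSet (box rm) := (box_closed rm).measurableSet
  have covs := cov T f (box rs) hms
  have covt := cov T f (box rt) hmt
  have covm := cov T f (box rm) hmm
  have hmain := hLBM (⇑T '' box rs) (⇑T '' box rt)
    (image_box_convexBody T hrs_pos) (image_box_symm T rs)
    (image_box_convexBody T hrt_pos) (image_box_symm T rt) lam hlam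
  have hsub := logComb_subset T a s t lam hlam
  have hint : IntegrableOn f (⇑T '' box rm) volume :=
    hloc.integrableOn_isCompact ((box_compact rm).image T.toContinuousLinearEquiv.continuous)
  have hmono : ∫ x in logComb lam (⇑T '' box rs) (⇑T '' box rt), f x
      ≤ ∫ x in ⇑T '' box rm, f x := by
    apply setIntegral_mono_set hint
    · exact Filter.Eventually.of_forall fun x => hpos x
    · exact Filter.Eventually.of_forall hsub
  have hchain : (d * ∫ x in box rs, f (T x)) ^ lam * (d * ∫ x in box rt, f (T x)) ^ (1 - lam)
      ≤ d * ∫ x in box rm, f (T x) := by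
    rw [← covs, ← covt, ← covm]
    exact le_trans hmain hmono
  have hInts : 0 ≤ ∫ x in box rs, f (T x) :=
    setIntegral_nonneg hms fun x _ => hpos _
  have hIntt : 0 ≤ ∫ x in box rt, f (T x) :=
    setIntegral_nonneg hmt fun x _ => hpos _
  have hlhs : (d * ∫ x in box rs, f (T x)) ^ lam * (d * ∫ x in box rt, f (T x)) ^ (1 - lam)
      = d * ((∫ x in box rs, f (T x)) ^ lam * (∫ x in box rt, f (T x)) ^ (1 - lam)) := by
    rw [Real.mul_rpow hd_pos.le hInts, Real.mul_rpow hd_pos.le hIntt]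
    rw [show d ^ lam * (∫ x in box rs, f (T x)) ^ lam * (d ^ (1 - lam) * (∫ x in box rt, f (T x)) ^ (1 - lam))
      = (d ^ lam * d ^ (1 - lam)) * ((∫ x in box rs, f (T x)) ^ lam * (∫ x in box rt, f (T x)) ^ (1 - lam)) by ring]
    rw [← Real.rpow_add hd_pos, show lam + (1 - lam) = 1 by ring, Real.rpow_one]
  rw [hlhs] at hchain
  exact (mul_le_mul_iff_right₀ hd_pos).mp hchain
end
end

section
/- Let λ ∈ [0,1], let K, L be convex bodies in ℝⁿ containing the origin in their interiors, and let H be a linear subspace of ℝⁿ. Then {x ∈ H : ⟨x,u⟩ ≤ h_{K∩H}(u)^λ · h_{L∩H}(u)^{1−λ} for every u ∈ H} ⊆ (λ·K +₀ (1−λ)·L) ∩ H; that is, the logarithmic combination of K∩H and L∩H taken within the subspace H is contained in (λ·K +₀ (1−λ)·L) ∩ H. -/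
open MeasureTheory Set Pointwise

noncomputable section

lemma suppFun_aux {n : ℕ} (K : Set (EuclideanSpace ℝ (Fin n))) (hK : IsCompact K)
    (H : Submodule ℝ (EuclideanSpace ℝ (Fin n)))
    (h0 : (0:EuclideanSpace ℝ (Fin n)) ∈ K)
    (u : EuclideanSpace ℝ (Fin n)) :
    0 ≤ sSup ((fun y => (inner ℝ ((H.orthogonalProjectionOnto u : EuclideanSpace ℝ (Fin n))) y : ℝ)) '' (K ∩ H)) ∧
    sSup ((fun y => (inner ℝ ((H.orthogonalProjectionOnto u : EuclideanSpace ℝ (Fin n))) y : ℝ)) '' (K ∩ H)) ≤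
      sSup ((fun y => (inner ℝ u y : ℝ)) '' K) := by
  set v : EuclideanSpace ℝ (Fin n) := (H.orthogonalProjectionOnto u : EuclideanSpace ℝ (Fin n))
  have hHc : IsClosed (H : Set (EuclideanSpace ℝ (Fin n))) := Submodule.closed_of_finiteDimensional H
  have hKH : IsCompact (K ∩ (H : Set _)) := hK.inter_right hHc
  have hcont : Continuous fun y : EuclideanSpace ℝ (Fin n) => (inner ℝ v y : ℝ) :=
    continuous_const.inner continuous_id
  have bdd1 : BddAbove ((fun y => (inner ℝ v y : ℝ)) '' (K ∩ H)) := (hKH.image hcont).bddAbove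
  have bdd2 : BddAbove ((fun y => (inner ℝ u y : ℝ)) '' K) :=
    (hK.image (continuous_const.inner continuous_id)).bddAbove
  have h0KH : (0:EuclideanSpace ℝ (Fin n)) ∈ K ∩ (H : Set _) := ⟨h0, H.zero_mem⟩
  have hperp : u - v ∈ Hᗮ := H.sub_starProjection_mem_orthogonal u
  have hinner : ∀ y ∈ H, (inner ℝ v y : ℝ) = inner ℝ u y := by
    intro y hy
    have h1 : (inner ℝ (u - v) y : ℝ) = 0 := by
      rw [real_inner_comm]; exact hperp y hy
    have h2 : (inner ℝ (u - v) y : ℝ) = inner ℝ u y - inner ℝ v y := inner_sub_left u v y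
    rw [h2] at h1
    linarith
  constructor
  · refine le_csSup bdd1 ⟨0, h0KH, by simp⟩
  · refine csSup_le ⟨_, Set.mem_image_of_mem _ h0KH⟩ ?_
    rintro _ ⟨y, ⟨hyK, hyH⟩, rfl⟩
    simp only [hinner y hyH]
    exact le_csSup bdd2 ⟨y, hyK, rfl⟩

/-- Lemma 6.5: the logarithmic combination of sections is contained in the section of the
logarithmic combination. -/
theorem logComb_sections_subset (n : ℕ) (lam : ℝ) (hlam : lam ∈ Set.Icc (0:ℝ) 1)
    (K L : Set (EuclideanSpace ℝ (Fin n)))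
    (hK : IsConvexBody K) (hK0 : (0 : EuclideanSpace ℝ (Fin n)) ∈ interior K)
    (hL : IsConvexBody L) (hL0 : (0 : EuclideanSpace ℝ (Fin n)) ∈ interior L)
    (H : Submodule ℝ (EuclideanSpace ℝ (Fin n))) :
    {x : EuclideanSpace ℝ (Fin n) | x ∈ H ∧ ∀ u ∈ H,
        (inner ℝ x u : ℝ) ≤ suppFun (K ∩ (H : Set (EuclideanSpace ℝ (Fin n)))) u ^ lam *
          suppFun (L ∩ (H : Set (EuclideanSpace ℝ (Fin n)))) u ^ (1 - lam)}
      ⊆ logComb lam K L ∩ (H : Set (EuclideanSpace ℝ (Fin n))) := by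
  rintro x ⟨hxH, hx⟩
  refine ⟨?_, hxH⟩
  intro u _
  set v : EuclideanSpace ℝ (Fin n) := (H.orthogonalProjectionOnto u : EuclideanSpace ℝ (Fin n)) with hv
  have hvH : v ∈ H := SetLike.coe_mem _
  obtain ⟨hK0', hKle⟩ := suppFun_aux K hK.2.1 H (interior_subset hK0) u
  obtain ⟨hL0', hLle⟩ := suppFun_aux L hL.2.1 H (interior_subset hL0) u
  have hKn : (0:ℝ) ≤ suppFun (K ∩ (H : Set _)) v := hK0'
  have hLn : (0:ℝ) ≤ suppFun (L ∩ (H : Set _)) v := hL0'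
  have hKle' : suppFun (K ∩ (H : Set _)) v ≤ suppFun K u := hKle
  have hLle' : suppFun (L ∩ (H : Set _)) v ≤ suppFun L u := hLle
  have hperp : u - v ∈ Hᗮ := H.sub_starProjection_mem_orthogonal u
  have hxu : (inner ℝ x u : ℝ) = inner ℝ x v := by
    have h1 : (inner ℝ x (u - v) : ℝ) = 0 :=
      (Submodule.mem_orthogonal H (u - v)).mp hperp x hxH
    have h2 : (inner ℝ x (u - v) : ℝ) = inner ℝ x u - inner ℝ x v := inner_sub_right x u v
    rw [h2] at h1; linarith
  rw [hxu]
  calc (inner ℝ x v : ℝ)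
      ≤ suppFun (K ∩ (H : Set _)) v ^ lam * suppFun (L ∩ (H : Set _)) v ^ (1 - lam) :=
        hx v hvH
    _ ≤ suppFun K u ^ lam * suppFun L u ^ (1 - lam) := by
        apply mul_le_mul
        · exact Real.rpow_le_rpow hKn hKle' hlam.1
        · exact Real.rpow_le_rpow hLn hLle' (by linarith [hlam.2])
        · exact Real.rpow_nonneg hLn _
        · exact Real.rpow_nonneg (le_trans hKn hKle') _
end
end
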